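/- arXiv:2512.12886 — 6 statements merged into one kernel-verified Lean document; each statement's English description precedes it below -/
import Mathlib

section
/- Let T be a finite TD-unmixed balanced tree of height 3, and let r be a vertex of height 3. Then the induced subgraph T∖{r} is a TD-unmixed balanced forest. -/
open scoped Classical

section GraphDefs

variable {V : Type} (G : SimpleGraph V)

/-- A leaf is a vertex of degree 1. -/
def IsLeafVx (v : V) : Prop := (G.neighborSet v).ncard = 1

/-- The height of a vertex: the minimum distance to a leaf in its connected
component (`0` if there is no leaf reachable from it, e.g. for isolated vertices). -/
noncomputable def heightVx (v : V) : ℕ :=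
  sInf {n | ∃ l, IsLeafVx G l ∧ G.Reachable v l ∧ G.dist v l = n}

/-- The height of a graph: the maximum height of a vertex. -/
noncomputable def heightGr : ℕ := sSup (Set.range (heightVx G))

/-- A graph is balanced if no two adjacent vertices have the same height. -/
def IsBalanced : Prop := ∀ u w, G.Adj u w → heightVx G u ≠ heightVx G w

/-- The open neighborhood of a set of vertices. -/
def nbhd (S : Set V) : Set V := {u | ∃ v ∈ S, G.Adj v u}

/-- A total dominating set: `N(S) = V`. -/
def IsTDSet (S : Set V) : Prop := nbhd G S = Set.univ

/-- A minimal total dominating set. -/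
def IsMinTDSet (S : Set V) : Prop := IsTDSet G S ∧ ∀ S' ⊂ S, ¬ IsTDSet G S'

/-- A graph is TD-unmixed if all of its minimal total dominating sets have
the same cardinality. -/
def TDUnmixed : Prop :=
  ∀ S₁ S₂ : Set V, IsMinTDSet G S₁ → IsMinTDSet G S₂ → S₁.ncard = S₂.ncard

/-- A forest is TD-unmixed if every connected component is TD-unmixed. -/
def ComponentwiseTDUnmixed : Prop :=
  ∀ c : G.ConnectedComponent, TDUnmixed (G.induce c.supp)

end GraphDefs
set_option linter.unusedSectionVars false
set_option linter.unusedVariables false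

section Basics

variable {V : Type} {G : SimpleGraph V}

lemma nbhd_mono {S S' : Set V} (h : S ⊆ S') : nbhd G S ⊆ nbhd G S' := by
  rintro x ⟨v, hv, hadj⟩; exact ⟨v, h hv, hadj⟩

lemma isTD_iff {S : Set V} : IsTDSet G S ↔ ∀ y, ∃ x ∈ S, G.Adj x y := by
  simp [IsTDSet, Set.eq_univ_iff_forall, nbhd]

lemma isMinTD_iff {S : Set V} :
    IsMinTDSet G S ↔ IsTDSet G S ∧ ∀ x ∈ S, ¬ IsTDSet G (S \ {x}) := by
  constructor
  · rintro ⟨h1, h2⟩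
    exact ⟨h1, fun x hx => h2 _ (Set.sdiff_singleton_ssubset.mpr hx)⟩
  · rintro ⟨h1, h2⟩
    refine ⟨h1, fun S' hS' hTD => ?_⟩
    obtain ⟨x, hxS, hxS'⟩ := Set.exists_of_ssubset hS'
    have hsub : S' ⊆ S \ {x} := fun y hy =>
      ⟨hS'.1 hy, by rintro rfl; exact hxS' hy⟩
    refine h2 x hxS ?_
    rw [IsTDSet, Set.eq_univ_iff_forall]
    intro y
    have := hTD ▸ Set.mem_univ y
    rw [IsTDSet, Set.eq_univ_iff_forall] at hTD
    exact nbhd_mono hsub (hTD y)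

/-- The defining set for `heightVx`. -/
def hset (G : SimpleGraph V) (v : V) : Set ℕ :=
  {n | ∃ l, IsLeafVx G l ∧ G.Reachable v l ∧ G.dist v l = n}

lemma heightVx_eq (v : V) : heightVx G v = sInf (hset G v) := rfl

lemma height_le {v l : V} (hl : IsLeafVx G l) (hre : G.Reachable v l) :
    heightVx G v ≤ G.dist v l :=
  Nat.sInf_le ⟨l, hl, hre, rfl⟩

lemma exists_min_leaf {v : V} (hne : (hset G v).Nonempty) :
    ∃ l, IsLeafVx G l ∧ G.Reachable v l ∧ G.dist v l = heightVx G v := by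
  have := Nat.sInf_mem hne
  obtain ⟨l, h1, h2, h3⟩ := this
  exact ⟨l, h1, h2, h3⟩

lemma hset_nonempty_of_ne_zero {v : V} (h : heightVx G v ≠ 0) : (hset G v).Nonempty := by
  by_contra hc
  rw [Set.not_nonempty_iff_eq_empty] at hc
  rw [heightVx_eq, hc] at h
  simp at h

lemma hset_nonempty_of_reachable {v w : V} (hre : G.Reachable v w)
    (h : (hset G w).Nonempty) : (hset G v).Nonempty := by
  obtain ⟨n, l, h1, h2, h3⟩ := h
  exact ⟨G.dist v l, l, h1, hre.trans h2, rfl⟩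

lemma leaf_height {l : V} (hl : IsLeafVx G l) : heightVx G l = 0 :=
  Nat.le_zero.mp (by simpa [SimpleGraph.dist_self] using height_le hl (.refl l))

lemma eq_leaf_of_height_zero {v : V} (h : heightVx G v = 0) (hne : (hset G v).Nonempty) :
    IsLeafVx G v := by
  obtain ⟨l, h1, h2, h3⟩ := exists_min_leaf hne
  rw [h, h2.dist_eq_zero_iff] at h3
  rwa [h3]

lemma height_le_dist_add {v w : V} (hre : G.Reachable v w) :
    heightVx G v ≤ G.dist v w + heightVx G w := by
  by_cases hne : (hset G w).Nonempty
  · obtain ⟨l, h1, h2, h3⟩ := exists_min_leaf hne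
    have h4 : heightVx G v ≤ G.dist v l := height_le h1 (hre.trans h2)
    refine h4.trans (h3 ▸ ?_)
    obtain ⟨p, hp⟩ := hre.exists_walk_length_eq_dist
    obtain ⟨q, hq⟩ := h2.exists_walk_length_eq_dist
    calc G.dist v l ≤ (p.append q).length := SimpleGraph.dist_le _
      _ = G.dist v w + G.dist w l := by rw [SimpleGraph.Walk.length_append, hp, hq]
  · have h0 : heightVx G v = 0 := by
      by_contra hc
      exact hne (hset_nonempty_of_reachable hre.symm (hset_nonempty_of_ne_zero hc))
    omega

lemma adj_height_le {v w : V} (h : G.Adj v w) : heightVx G v ≤ heightVx G w + 1 := by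
  have := height_le_dist_add (G := G) (v := v) (w := w) h.reachable
  have hd : G.dist v w = 1 := SimpleGraph.dist_eq_one_iff_adj.mpr h
  omega

lemma adj_height_cases (hbal : IsBalanced G) {v w : V} (h : G.Adj v w) :
    heightVx G v = heightVx G w + 1 ∨ heightVx G w = heightVx G v + 1 := by
  have h1 := adj_height_le h
  have h2 := adj_height_le h.symm
  have h3 := hbal v w h
  omega

lemma height_bound [Fintype V] (hht : heightGr G = 3) (v : V) : heightVx G v ≤ 3 := by
  rw [← hht, heightGr]
  exact le_csSup ((Set.finite_range _).bddAbove) (Set.mem_range_self v)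

/-- From a leaf, extract the unique neighbor. -/
lemma leaf_unique_nbr {l : V} (hl : IsLeafVx G l) : ∃ z, G.neighborSet l = {z} :=
  Set.ncard_eq_one.mp hl

lemma isLeaf_of_unique {x z : V} (hadj : G.Adj x z) (huniq : ∀ y, G.Adj x y → y = z) :
    IsLeafVx G x := by
  have : G.neighborSet x = {z} := by
    ext y; exact ⟨fun hy => huniq y hy, fun hy => hy ▸ hadj⟩
  rw [IsLeafVx, this, Set.ncard_singleton]

end Basics
section Struct

variable {V : Type} {G : SimpleGraph V}

lemma exists_nbr_height_pred {v : V} {n : ℕ} (h : heightVx G v = n + 1) :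
    ∃ w, G.Adj v w ∧ heightVx G w = n ∧ (hset G w).Nonempty := by
  obtain ⟨l, hl, hre, hd⟩ := exists_min_leaf (hset_nonempty_of_ne_zero (by omega : heightVx G v ≠ 0))
  rw [h] at hd
  obtain ⟨p, hp⟩ := hre.exists_walk_length_eq_dist
  rw [hd] at hp
  cases p with
  | nil => simp at hp
  | @cons _ w _ hadj q =>
    simp only [SimpleGraph.Walk.length_cons, Nat.add_right_cancel_iff] at hp
    have hwl : G.dist w l ≤ n := hp ▸ SimpleGraph.dist_le q
    have hwle : heightVx G w ≤ n := (height_le hl q.reachable).trans hwl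
    have := adj_height_le hadj
    exact ⟨w, hadj, by omega, ⟨G.dist w l, l, hl, q.reachable, rfl⟩⟩

/-- Walk to a nearest leaf avoiding a vertex `r` of maximal height. -/
lemma exists_walk_to_leaf_avoid [Fintype V] (hht : heightGr G = 3) {r : V}
    (hr : heightVx G r = 3) :
    ∀ n (v : V), v ≠ r → heightVx G v = n → (hset G v).Nonempty →
    ∃ (l : V) (p : G.Walk v l), IsLeafVx G l ∧ p.length = n ∧ ∀ x ∈ p.support, x ≠ r := by
  intro n
  induction n with
  | zero =>
    intro v hvr h hne
    exact ⟨v, .nil, eq_leaf_of_height_zero h hne, rfl, by simpa using hvr⟩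
  | succ n ih =>
    intro v hvr h _
    obtain ⟨w, hadj, hw, hwne⟩ := exists_nbr_height_pred h
    have hvle : heightVx G v ≤ 3 := height_bound hht v
    have hwr : w ≠ r := by rintro rfl; omega
    obtain ⟨l, p, hl, hlen, hsup⟩ := ih w hwr hw hwne
    refine ⟨l, .cons hadj p, hl, by simp [hlen], ?_⟩
    intro x hx
    rw [SimpleGraph.Walk.support_cons] at hx
    rcases List.mem_cons.mp hx with rfl | hx
    · exact hvr
    · exact hsup x hx

variable {r : V}

/-- Lift a walk avoiding `r` to the induced graph on `{x | x ≠ r}`. -/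
lemma walk_lift {a b : V} (p : G.Walk a b) (hp : ∀ x ∈ p.support, x ≠ r) :
    ∃ q : (G.induce {x | x ≠ r}).Walk ⟨a, hp a p.start_mem_support⟩ ⟨b, hp b p.end_mem_support⟩,
      q.length = p.length := by
  induction p with
  | nil => exact ⟨.nil, rfl⟩
  | @cons u c b' hadj p ih =>
    have hp' : ∀ x ∈ p.support, x ≠ r := fun x hx =>
      hp x (by rw [SimpleGraph.Walk.support_cons]; exact List.mem_cons_of_mem _ hx)
    obtain ⟨q, hq⟩ := ih hp'
    exact ⟨.cons (by exact hadj) q, by show q.length + 1 = p.length + 1; rw [hq]⟩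

lemma reachable_of_induced {a b : ↥{x | x ≠ r}} (h : (G.induce {x | x ≠ r}).Reachable a b) :
    G.Reachable (a : V) (b : V) := by
  obtain ⟨p⟩ := h
  exact ⟨(p.map (SimpleGraph.Embedding.induce {x | x ≠ r}).toHom)⟩

lemma dist_le_induced_dist {a b : ↥{x | x ≠ r}} (h : (G.induce {x | x ≠ r}).Reachable a b) :
    G.dist (a : V) (b : V) ≤ (G.induce {x | x ≠ r}).dist a b := by
  obtain ⟨p, hp⟩ := h.exists_walk_length_eq_dist
  calc G.dist (a:V) (b:V) ≤ (p.map (SimpleGraph.Embedding.induce {x | x ≠ r}).toHom).length :=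
        SimpleGraph.dist_le _
    _ = _ := by rw [SimpleGraph.Walk.length_map, hp]

end Struct
section Del

variable {V : Type} [Fintype V] {G : SimpleGraph V} {r : V}

lemma hset_all (htree : G.IsTree) (hr : heightVx G r = 3) (v : V) :
    (hset G v).Nonempty :=
  hset_nonempty_of_reachable (htree.isConnected v r)
    (hset_nonempty_of_ne_zero (by omega))

lemma h_nbr (hbal : IsBalanced G) (hht : heightGr G = 3) (hr : heightVx G r = 3)
    {u : V} (hadj : G.Adj r u) : heightVx G u = 2 := by
  have h1 := adj_height_cases hbal hadj
  have h2 := height_bound hht u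
  omega

lemma exists_two_nbrs (htree : G.IsTree) (hr : heightVx G r = 3) :
    ∃ u₁ u₂, G.Adj r u₁ ∧ G.Adj r u₂ ∧ u₁ ≠ u₂ := by
  have hne : (G.neighborSet r).Nonempty := by
    obtain ⟨w, hadj, _, _⟩ := exists_nbr_height_pred (n := 2) hr
    exact ⟨w, hadj⟩
  have hfin : (G.neighborSet r).Finite := Set.toFinite _
  have h1 : (G.neighborSet r).ncard ≠ 1 := by
    intro hc
    have : heightVx G r = 0 := leaf_height hc
    omega
  have h0 : 0 < (G.neighborSet r).ncard := (Set.ncard_pos hfin).mpr hne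
  have : 1 < (G.neighborSet r).ncard := by omega
  obtain ⟨a, b, ha, hb, hab⟩ := (Set.one_lt_ncard_iff hfin).mp this
  exact ⟨a, b, ha, hb, hab⟩

/-- A neighbor of `r` of degree 2 in `G` (these become leaves after deleting `r`). -/
def NewLeaf (G : SimpleGraph V) (r v : V) : Prop :=
  G.Adj r v ∧ (G.neighborSet v).ncard = 2

lemma newLeaf_struct (hbal : IsBalanced G) (hht : heightGr G = 3) (hr : heightVx G r = 3)
    {u : V} (h : NewLeaf G r u) :
    ∃ w, w ≠ r ∧ G.Adj u w ∧ heightVx G w = 1 ∧ G.neighborSet u = {r, w} := by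
  obtain ⟨hadj, hcard⟩ := h
  have hu2 : heightVx G u = 2 := h_nbr hbal hht hr hadj
  obtain ⟨z, hz, hz1, _⟩ := exists_nbr_height_pred (n := 1) hu2
  obtain ⟨a, b, hab, hs⟩ := Set.ncard_eq_two.mp hcard
  have hrmem : r ∈ G.neighborSet u := hadj.symm
  have hzmem : z ∈ G.neighborSet u := hz
  have hzr : z ≠ r := by rintro rfl; omega
  rw [hs] at hrmem hzmem
  rcases hrmem with rfl | rfl
  · rcases hzmem with rfl | rfl
    · exact absurd rfl hzr
    · exact ⟨z, hzr, hz, hz1, hs⟩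
  · rcases hzmem with rfl | rfl
    · exact ⟨z, hzr, hz, hz1, by rw [hs, Set.pair_comm]⟩
    · exact absurd rfl hzr

lemma newLeaf_isLeaf' (hbal : IsBalanced G) (hht : heightGr G = 3) (hr : heightVx G r = 3)
    {u : ↥{x | x ≠ r}} (h : NewLeaf G r u.val) :
    IsLeafVx (G.induce {x | x ≠ r}) u := by
  obtain ⟨w, hwr, hwadj, hw1, hset⟩ := newLeaf_struct hbal hht hr h
  refine isLeaf_of_unique (z := ⟨w, hwr⟩) (by exact hwadj) ?_
  intro y hy
  have : (y : V) ∈ G.neighborSet u.val := hy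
  rw [hset] at this
  rcases this with h' | h'
  · exact absurd h' y.2
  · exact Subtype.ext h'

lemma G'_leaf_cases (hbal : IsBalanced G) (hht : heightGr G = 3) (hr : heightVx G r = 3)
    {x : ↥{x | x ≠ r}} (hl : IsLeafVx (G.induce {x | x ≠ r}) x) :
    IsLeafVx G x.val ∨ NewLeaf G r x.val := by
  obtain ⟨z, hz⟩ := leaf_unique_nbr hl
  have hzadj : G.Adj x.val z.val := by
    have : z ∈ (G.induce {x | x ≠ r}).neighborSet x := by rw [hz]; rfl
    exact this
  have hsub : ∀ y, G.Adj x.val y → y = r ∨ y = z.val := by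
    intro y hy
    by_cases hyr : y = r
    · exact Or.inl hyr
    · right
      have : (⟨y, hyr⟩ : ↥{x | x ≠ r}) ∈ (G.induce {x | x ≠ r}).neighborSet x := hy
      rw [hz] at this
      exact congrArg Subtype.val this
  by_cases hradj : G.Adj x.val r
  · right
    refine ⟨hradj.symm, ?_⟩
    have : G.neighborSet x.val = {r, z.val} := by
      ext y
      constructor
      · intro hy; exact hsub y hy
      · rintro (rfl | rfl); exacts [hradj, hzadj]
    rw [this]
    exact Set.ncard_pair (fun hc => z.2 hc.symm)
  · left
    refine isLeaf_of_unique hzadj ?_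
    intro y hy
    rcases hsub y hy with rfl | rfl
    · exact absurd hy hradj
    · rfl

lemma G_leaf_is_G'_leaf (hbal : IsBalanced G) (hht : heightGr G = 3) (hr : heightVx G r = 3)
    {l : V} (hl : IsLeafVx G l) (hlr : l ≠ r) :
    IsLeafVx (G.induce {x | x ≠ r}) ⟨l, hlr⟩ := by
  obtain ⟨z, hz⟩ := leaf_unique_nbr hl
  have hzadj : G.Adj l z := by rw [← SimpleGraph.mem_neighborSet, hz]; rfl
  have hzr : z ≠ r := by
    rintro rfl
    have := h_nbr hbal hht hr hzadj.symm
    have := leaf_height hl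
    omega
  refine isLeaf_of_unique (z := ⟨z, hzr⟩) (by exact hzadj) ?_
  intro y hy
  have : (y : V) ∈ G.neighborSet l := hy
  rw [hz] at this
  exact Subtype.ext this

end Del
section Transfer

variable {V : Type} [Fintype V] {G : SimpleGraph V} {r : V}

lemma height_transfer (htree : G.IsTree) (hbal : IsBalanced G) (hht : heightGr G = 3)
    (hr : heightVx G r = 3) (v : ↥{x | x ≠ r}) (hnl : ¬ NewLeaf G r v.val) :
    heightVx (G.induce {x | x ≠ r}) v = heightVx G v.val := by
  set G' := G.induce {x | x ≠ r} with hG'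
  set n := heightVx G v.val with hn
  -- upper bound: some element of the defining set is ≤ n
  obtain ⟨l, p, hl, hlen, hsup⟩ :=
    exists_walk_to_leaf_avoid hht hr n v.val v.2 rfl (hset_all htree hr _)
  obtain ⟨q, hq⟩ := walk_lift p hsup
  have hlr : l ≠ r := hsup l p.end_mem_support
  have hlleaf : IsLeafVx G' ⟨l, hlr⟩ := G_leaf_is_G'_leaf hbal hht hr hl hlr
  have hmem : G'.dist v ⟨l, hlr⟩ ∈ hset G' v := ⟨⟨l, hlr⟩, hlleaf, ⟨q⟩, rfl⟩
  have hub : G'.dist v ⟨l, hlr⟩ ≤ n := by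
    calc G'.dist v ⟨l, hlr⟩ ≤ q.length := SimpleGraph.dist_le _
      _ ≤ n := by rw [hq, hlen]
  -- lower bound: every element of the defining set is ≥ n
  have hlb : ∀ m ∈ hset G' v, n ≤ m := by
    rintro m ⟨l', hl', hre', rfl⟩
    rcases G'_leaf_cases hbal hht hr hl' with hcase | hcase
    · calc n ≤ G.dist v.val l'.val := height_le hcase (reachable_of_induced hre')
        _ ≤ G'.dist v l' := dist_le_induced_dist hre'
    · obtain ⟨w, hwr, hwadj, hw1, hnb⟩ := newLeaf_struct hbal hht hr hcase
      have hvl' : v ≠ l' := by rintro rfl; exact hnl hcase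
      have hd0 : G'.dist v l' ≠ 0 := Nat.pos_iff_ne_zero.mp (hre'.pos_dist_of_ne hvl')
      obtain ⟨p', hp'⟩ := hre'.symm.exists_walk_length_eq_dist
      rw [SimpleGraph.dist_comm] at hp'
      cases p' with
      | nil => exact absurd rfl hvl'.symm
      | @cons _ x _ hadj q' =>
        have hxw : x.val = w := by
          have : x.val ∈ G.neighborSet l'.val := hadj
          rw [hnb] at this
          rcases this with h' | h'
          · exact absurd h' x.2
          · exact h'
        have hql : q'.length = G'.dist v l' - 1 := by
          simp only [SimpleGraph.Walk.length_cons] at hp'; omega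
        have hreach : G.Reachable x.val v.val := reachable_of_induced ⟨q'⟩
        have hdle : G.dist v.val x.val ≤ q'.length := by
          rw [SimpleGraph.dist_comm]
          calc G.dist x.val v.val
              ≤ (q'.map (SimpleGraph.Embedding.induce {x | x ≠ r}).toHom).length :=
                SimpleGraph.dist_le _
            _ = q'.length := SimpleGraph.Walk.length_map _ _
        have hle := height_le_dist_add (G := G) hreach.symm
        rw [hxw] at hle hdle
        rw [hw1] at hle
        have hn3 : n ≤ 3 := height_bound hht v.val
        omega
  have hne : (hset G' v).Nonempty := ⟨_, hmem⟩
  have h1 : heightVx G' v ≤ n := le_trans (Nat.sInf_le hmem) hub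
  have h2 : n ≤ heightVx G' v := hlb _ (Nat.sInf_mem hne)
  omega

end Transfer
section Bal

variable {V : Type} [Fintype V] {G : SimpleGraph V} {r : V}

lemma acyclic_del (htree : G.IsTree) : (G.induce {x | x ≠ r}).IsAcyclic := by
  intro v c hc
  have := hc.map (f := (SimpleGraph.Embedding.induce {x | x ≠ r}).toHom)
    (Subtype.val_injective)
  exact htree.IsAcyclic _ this

lemma balanced_del (htree : G.IsTree) (hbal : IsBalanced G) (hht : heightGr G = 3)
    (hr : heightVx G r = 3) : IsBalanced (G.induce {x | x ≠ r}) := by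
  intro x y hadj
  have hGadj : G.Adj x.val y.val := hadj
  by_cases hx : NewLeaf G r x.val <;> by_cases hy : NewLeaf G r y.val
  · exact absurd ((h_nbr hbal hht hr hx.1).trans (h_nbr hbal hht hr hy.1).symm)
      (hbal _ _ hGadj)
  · have h0 : heightVx (G.induce {x | x ≠ r}) x = 0 :=
      leaf_height (newLeaf_isLeaf' hbal hht hr hx)
    rw [h0, height_transfer htree hbal hht hr y hy]
    have h2 : heightVx G x.val = 2 := h_nbr hbal hht hr hx.1
    have := adj_height_cases hbal hGadj
    omega
  · have h0 : heightVx (G.induce {x | x ≠ r}) y = 0 :=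
      leaf_height (newLeaf_isLeaf' hbal hht hr hy)
    rw [h0, height_transfer htree hbal hht hr x hx]
    have h2 : heightVx G y.val = 2 := h_nbr hbal hht hr hy.1
    have := adj_height_cases hbal hGadj
    omega
  · rw [height_transfer htree hbal hht hr x hx, height_transfer htree hbal hht hr y hy]
    exact hbal _ _ hGadj

end Bal
section Helpers

variable {V : Type} [Fintype V] {G : SimpleGraph V} {r : V}

lemma exists_nbr (htree : G.IsTree) {y : V} (hy : y ≠ r) : ∃ z, G.Adj y z := by
  obtain ⟨p⟩ := htree.isConnected y r
  cases p with
  | nil => exact absurd rfl hy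
  | cons hadj _ => exact ⟨_, hadj⟩

/-- In a tree, there cannot be two distinct "midpoints" between two distinct vertices. -/
lemma no_common (htree : G.IsTree) {a b x₁ x₂ : V} (hx : x₁ ≠ x₂)
    (h1 : G.Adj a x₁) (h2 : G.Adj x₁ b) (h3 : G.Adj a x₂) (h4 : G.Adj x₂ b)
    (hab : a ≠ b) : False := by
  have hp1 : (SimpleGraph.Walk.cons h1 h2.toWalk).IsPath := by
    rw [SimpleGraph.Walk.isPath_def]
    simp [h1.ne, h2.ne, hab]
  have hp2 : (SimpleGraph.Walk.cons h3 h4.toWalk).IsPath := by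
    rw [SimpleGraph.Walk.isPath_def]
    simp [h3.ne, h4.ne, hab]
  have := SimpleGraph.isAcyclic_iff_path_unique.mp htree.IsAcyclic ⟨_, hp1⟩ ⟨_, hp2⟩
  have hsup := congrArg (fun p : G.Path a b => x₁ ∈ p.1.support) this
  simp only [SimpleGraph.Walk.support_cons, SimpleGraph.Adj.toWalk,
    SimpleGraph.Walk.support_cons, SimpleGraph.Walk.support_nil] at hsup
  have : x₁ ∈ [a, x₂, b] := by
    rw [← hsup]; simp
  simp only [List.mem_cons, List.mem_singleton, List.not_mem_nil, or_false] at this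
  rcases this with rfl | rfl | rfl
  · exact h1.ne rfl
  · exact hx rfl
  · exact h2.ne rfl

/-- Two distinct neighbors of `r` are not reachable in `G ∖ r`. -/
lemma nbrs_sep (htree : G.IsTree) {u₁ u₂ : V} (h1 : G.Adj r u₁) (h2 : G.Adj r u₂)
    (hne : u₁ ≠ u₂)
    (hre : (G.induce {x | x ≠ r}).Reachable ⟨u₁, h1.ne'⟩ ⟨u₂, h2.ne'⟩) : False := by
  obtain ⟨q⟩ := hre
  let p₀ := q.map (SimpleGraph.Embedding.induce {x | x ≠ r}).toHom
  have hsup : ∀ x ∈ p₀.support, x ≠ r := by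
    show ∀ x ∈ (q.map (SimpleGraph.Embedding.induce {x | x ≠ r}).toHom).support, x ≠ r
    intro x hx
    rw [SimpleGraph.Walk.support_map] at hx
    obtain ⟨y, _, rfl⟩ := List.mem_map.mp hx
    exact y.2
  have hp2 : (SimpleGraph.Walk.cons h1.symm (SimpleGraph.Walk.cons h2 .nil)).IsPath := by
    rw [SimpleGraph.Walk.isPath_def]
    simp [h1.ne', h2.ne, hne]
  have heq := SimpleGraph.isAcyclic_iff_path_unique.mp htree.IsAcyclic p₀.toPath ⟨_, hp2⟩
  have hrmem : r ∈ p₀.toPath.val.support := by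
    rw [heq]; simp
  exact hsup r (SimpleGraph.Walk.support_toPath_subset _ hrmem) rfl

end Helpers
section Outside

variable {V : Type} [Fintype V] {G : SimpleGraph V} {r : V}

lemma outside_dom (htree : G.IsTree) (hbal : IsBalanced G) (hht : heightGr G = 3)
    (hr : heightVx G r = 3) (C : Set V)
    (hC : ∀ ⦃y z : V⦄, y ∈ C → G.Adj y z → z ≠ r → z ∈ C)
    {u w : V} (hu : G.Adj r u) (huC : u ∉ C) (huw : G.Adj u w) (hw1 : heightVx G w = 1) :
    ∃ D : Set V, D ⊆ {z | z ≠ r ∧ z ∉ C} ∧ u ∈ D ∧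
      (∀ y ∈ {z | z ≠ r ∧ z ∉ C}, ∃ x ∈ D, G.Adj x y) ∧
      (∀ x ∈ D, ∃ y ∈ {z | z ≠ r ∧ z ∉ C}, ∀ x' ∈ D \ {x}, ¬ G.Adj x' y) ∧
      (∀ x ∈ D, G.Adj x w → x = u) := by
  set R : Set V := {z | z ≠ r ∧ z ∉ C} with hRdef
  have hRclosed : ∀ ⦃y z : V⦄, y ∈ R → G.Adj y z → z ≠ r → z ∈ R := by
    rintro y z ⟨hyr, hyC⟩ hadj hzr
    exact ⟨hzr, fun hzC => hyC (hC hzC hadj.symm hyr)⟩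
  have hur : u ≠ r := hu.ne'
  have hwr : w ≠ r := by rintro rfl; omega
  have huR : u ∈ R := ⟨hur, huC⟩
  have hwR : w ∈ R := hRclosed huR huw hwr
  have hu2 : heightVx G u = 2 := h_nbr hbal hht hr hu
  set D₀ : Set V := R \ (G.neighborSet w \ {u}) with hD₀def
  have huD₀ : u ∈ D₀ := ⟨huR, fun h => h.2 rfl⟩
  have hD₀dom : ∀ y ∈ R, ∃ x ∈ D₀, G.Adj x y := by
    intro y hyR
    by_contra hex
    push_neg at hex
    have hall : ∀ z, G.Adj z y → z = r ∨ (G.Adj w z ∧ z ≠ u) := by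
      intro z hz
      by_cases hzr : z = r
      · exact Or.inl hzr
      · have hzR : z ∈ R := hRclosed hyR hz.symm hzr
        have hzD₀ : z ∉ D₀ := fun h => hex z h hz
        have hzmem : z ∈ G.neighborSet w \ {u} := by
          by_contra h
          exact hzD₀ ⟨hzR, h⟩
        exact Or.inr ⟨hzmem.1, hzmem.2⟩
    have hyu : ¬ G.Adj u y := fun h => hex u huD₀ h
    obtain ⟨z₀, hz₀y, hz₀r⟩ : ∃ z, G.Adj z y ∧ z ≠ r := by
      by_contra h
      push_neg at h
      obtain ⟨z, hz⟩ := exists_nbr htree hyR.1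
      have hzr : z = r := h z hz.symm
      subst hzr
      have hleaf : IsLeafVx G y := isLeaf_of_unique hz (fun y' hy' => h y' hy'.symm)
      have h0 := leaf_height hleaf
      have h2 := h_nbr hbal hht hr hz.symm
      omega
    obtain ⟨hwz₀, hz₀u⟩ := (hall z₀ hz₀y).resolve_left hz₀r
    have hyw : y ≠ w := by rintro rfl; exact hyu huw
    have hz2 : heightVx G z₀ = 0 ∨ heightVx G z₀ = 2 := by
      have := adj_height_cases hbal hwz₀
      rw [hw1] at this
      omega
    rcases hz2 with hz0 | hz2
    · have hleaf : IsLeafVx G z₀ := eq_leaf_of_height_zero hz0 (hset_all htree hr _)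
      obtain ⟨t, ht⟩ := leaf_unique_nbr hleaf
      have h1 : w ∈ G.neighborSet z₀ := hwz₀.symm
      have h2 : y ∈ G.neighborSet z₀ := hz₀y
      rw [ht] at h1 h2
      exact hyw ((Set.mem_singleton_iff.mp h2).trans (Set.mem_singleton_iff.mp h1).symm)
    · have huniq : ∀ x, G.Adj y x → x = r ∨ x = z₀ := by
        intro x hx
        rcases hall x hx.symm with rfl | ⟨hwx, hxu⟩
        · exact Or.inl rfl
        · right
          by_contra hxz
          exact no_common htree hxz hx hwx.symm hz₀y.symm hwz₀.symm hyw
      by_cases hry : G.Adj y r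
      · have hy2 := h_nbr hbal hht hr hry.symm
        exact hbal y z₀ hz₀y.symm (by omega)
      · have hleaf : IsLeafVx G y := by
          refine isLeaf_of_unique hz₀y.symm (fun x hx => ?_)
          rcases huniq x hx with rfl | rfl
          · exact absurd hx hry
          · rfl
        have h0 := leaf_height hleaf
        have := adj_height_le hz₀y
        omega
  -- choose a minimum-cardinality dominating subset of D₀
  set M : Set ℕ := {m | ∃ D : Set V, D ⊆ D₀ ∧ (∀ y ∈ R, ∃ x ∈ D, G.Adj x y) ∧ D.ncard = m}
    with hMdef
  have hMne : M.Nonempty := ⟨D₀.ncard, D₀, le_refl _, hD₀dom, rfl⟩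
  obtain ⟨D, hDsub, hDdom, hDcard⟩ := Nat.sInf_mem hMne
  have hDu : ∀ x ∈ D, G.Adj x w → x = u := by
    intro x hxD hxw
    have hxD₀ := hDsub hxD
    by_contra hxu
    exact hxD₀.2 ⟨hxw.symm, hxu⟩
  have huD : u ∈ D := by
    obtain ⟨x, hxD, hxw⟩ := hDdom w hwR
    have := hDu x hxD hxw
    rwa [this] at hxD
  refine ⟨D, fun x hx => (hDsub hx).1, huD, hDdom, ?_, hDu⟩
  intro x hxD
  by_contra hmin
  push_neg at hmin
  have hdom' : ∀ y ∈ R, ∃ x' ∈ D \ {x}, G.Adj x' y := hmin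
  have hmem : (D \ {x}).ncard ∈ M :=
    ⟨D \ {x}, (Set.diff_subset).trans hDsub, hdom', rfl⟩
  have hlt : (D \ {x}).ncard < D.ncard := by
    rw [Set.ncard_diff_singleton_of_mem hxD]
    have : 0 < D.ncard := (Set.ncard_pos (Set.toFinite _)).mpr ⟨u, huD⟩
    omega
  have := Nat.sInf_le hmem
  omega

end Outside
section Main3

variable {V : Type} [Fintype V] {G : SimpleGraph V} {r : V}

lemma tdunmixed_del (htree : G.IsTree) (hbal : IsBalanced G) (hunm : TDUnmixed G)
    (hht : heightGr G = 3) (hr : heightVx G r = 3) :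
    ComponentwiseTDUnmixed (G.induce {x | x ≠ r}) := by
  intro c A B hA hB
  set π : ↥c.supp → V := fun a => (a.1 : V) with hπ
  have hπinj : Function.Injective π := fun a b h => Subtype.ext (Subtype.ext h)
  set C : Set V := Set.range π with hCdef
  have hCmem : ∀ y ∈ C, y ≠ r := by rintro y ⟨a, rfl⟩; exact a.1.2
  have hCclosed : ∀ ⦃y z : V⦄, y ∈ C → G.Adj y z → z ≠ r → z ∈ C := by
    rintro y z ⟨a, rfl⟩ hadj hzr
    have hadj' : (G.induce {x | x ≠ r}).Adj a.1 ⟨z, hzr⟩ := hadj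
    have h2 := a.2
    rw [SimpleGraph.ConnectedComponent.mem_supp_iff] at h2
    have h3 : (⟨z, hzr⟩ : ↥{x | x ≠ r}) ∈ c.supp := by
      rw [SimpleGraph.ConnectedComponent.mem_supp_iff]
      rw [← h2]
      exact SimpleGraph.ConnectedComponent.eq.mpr hadj'.symm.reachable
    exact ⟨⟨⟨z, hzr⟩, h3⟩, rfl⟩
  -- pick a neighbor of r outside C
  obtain ⟨u₁, u₂, h1, h2, h12⟩ := exists_two_nbrs htree (r := r) hr
  have hunotC : u₁ ∉ C ∨ u₂ ∉ C := by
    by_contra h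
    push_neg at h
    obtain ⟨a₁, ha₁⟩ := h.1
    obtain ⟨a₂, ha₂⟩ := h.2
    have hm₁ := a₁.2
    have hm₂ := a₂.2
    rw [SimpleGraph.ConnectedComponent.mem_supp_iff] at hm₁ hm₂
    have hre : (G.induce {x | x ≠ r}).Reachable a₁.1 a₂.1 :=
      SimpleGraph.ConnectedComponent.eq.mp (hm₁.trans hm₂.symm)
    have he₁ : a₁.1 = (⟨u₁, h1.ne'⟩ : ↥{x | x ≠ r}) := Subtype.ext ha₁
    have he₂ : a₂.1 = (⟨u₂, h2.ne'⟩ : ↥{x | x ≠ r}) := Subtype.ext ha₂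
    rw [he₁, he₂] at hre
    exact nbrs_sep htree h1 h2 h12 hre
  have hsel : ∃ u, G.Adj r u ∧ u ∉ C := by
    rcases hunotC with h | h
    · exact ⟨u₁, h1, h⟩
    · exact ⟨u₂, h2, h⟩
  obtain ⟨u, hu, huC⟩ := hsel
  have hu2 : heightVx G u = 2 := h_nbr hbal hht hr hu
  obtain ⟨w, huw, hw1, -⟩ := exists_nbr_height_pred (n := 1) hu2
  obtain ⟨D, hDsub, huD, hDdom, hDmin, hDw⟩ :=
    outside_dom htree hbal hht hr C hCclosed hu huC huw hw1
  have hwr : w ≠ r := by rintro rfl; omega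
  have hwC : w ∉ C := fun hw => huC (hCclosed hw huw.symm hu.ne')
  -- both extensions are minimal TD-sets of G
  have key : ∀ S : Set ↥c.supp,
      IsMinTDSet ((G.induce {x | x ≠ r}).induce c.supp) S →
      IsMinTDSet G (π '' S ∪ D) := by
    intro S hS
    rw [isMinTD_iff]
    constructor
    · rw [isTD_iff]
      intro y
      by_cases hyr : y = r
      · exact ⟨u, Or.inr huD, hyr ▸ hu.symm⟩
      by_cases hyC : y ∈ C
      · obtain ⟨a, rfl⟩ := hyC
        obtain ⟨x, hxS, hadj⟩ := isTD_iff.mp hS.1 a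
        exact ⟨π x, Or.inl ⟨x, hxS, rfl⟩, hadj⟩
      · obtain ⟨x, hxD, hadj⟩ := hDdom y ⟨hyr, hyC⟩
        exact ⟨x, Or.inr hxD, hadj⟩
    · intro x hx
      rcases hx with ⟨x', hx'S, rfl⟩ | hxD
      · have hmin := (isMinTD_iff.mp hS).2 x' hx'S
        rw [isTD_iff] at hmin
        push_neg at hmin
        obtain ⟨y, hy⟩ := hmin
        intro hTD
        obtain ⟨z, hz, hadj⟩ := isTD_iff.mp hTD (π y)
        rcases hz.1 with ⟨z', hz'S, rfl⟩ | hzD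
        · have hne : z' ≠ x' := fun hc => hz.2 (by rw [hc]; exact rfl)
          exact hy z' ⟨hz'S, hne⟩ hadj
        · have hzR := hDsub hzD
          have : π y ∈ C := ⟨y, rfl⟩
          exact hzR.2 (hCclosed this hadj.symm hzR.1)
      · by_cases hxu : x = u
        · subst hxu
          intro hTD
          obtain ⟨z, hz, hadj⟩ := isTD_iff.mp hTD w
          rcases hz.1 with ⟨z', hz'S, rfl⟩ | hzD
          · exact hwC (hCclosed ⟨z', rfl⟩ hadj hwr)
          · exact hz.2 (hDw z hzD hadj)
        · obtain ⟨y, hyR, hymin⟩ := hDmin x hxD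
          intro hTD
          obtain ⟨z, hz, hadj⟩ := isTD_iff.mp hTD y
          rcases hz.1 with ⟨z', hz'S, rfl⟩ | hzD
          · exact hyR.2 (hCclosed ⟨z', rfl⟩ hadj hyR.1)
          · exact hymin z ⟨hzD, hz.2⟩ hadj
  have hcard := hunm _ _ (key A hA) (key B hB)
  have hdisjA : Disjoint (π '' A) D := by
    rw [Set.disjoint_left]
    rintro x ⟨a, -, rfl⟩ hxD
    exact (hDsub hxD).2 ⟨a, rfl⟩
  have hdisjB : Disjoint (π '' B) D := by
    rw [Set.disjoint_left]
    rintro x ⟨a, -, rfl⟩ hxD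
    exact (hDsub hxD).2 ⟨a, rfl⟩
  rw [Set.ncard_union_eq hdisjA (Set.toFinite _) (Set.toFinite _),
    Set.ncard_union_eq hdisjB (Set.toFinite _) (Set.toFinite _),
    Set.ncard_image_of_injective _ hπinj, Set.ncard_image_of_injective _ hπinj] at hcard
  omega

end Main3

/-- **Proposition**: if `T` is a finite TD-unmixed balanced tree of height 3 and `r` is a
vertex of height 3, then the induced subgraph `T∖{r}` is a TD-unmixed balanced forest. -/
theorem delete_height_three_vertex {V : Type} [Fintype V] (G : SimpleGraph V)
    (htree : G.IsTree) (hbal : IsBalanced G) (hunm : TDUnmixed G)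
    (hht : heightGr G = 3) (r : V) (hr : heightVx G r = 3) :
    (G.induce {x | x ≠ r}).IsAcyclic ∧ IsBalanced (G.induce {x | x ≠ r}) ∧
      ComponentwiseTDUnmixed (G.induce {x | x ≠ r}) :=
  ⟨acyclic_del htree, balanced_del htree hbal hht hr,
    tdunmixed_del htree hbal hunm hht hr⟩
end

section
/- Let T be a finite TD-unmixed balanced tree of height 3, and let r be a vertex of height 3. Then V_odd(T∖{r}) = V_odd(T)∖{r}, where heights on the left are computed in the induced subgraph T∖{r} and on the right in T. -/
open scoped Classical

section Aux
variable {W : Type} {H : SimpleGraph W}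

lemma height_le_dist' {v l : W} (hl : IsLeafVx H l) (hre : H.Reachable v l) :
    heightVx H v ≤ H.dist v l :=
  Nat.sInf_le ⟨l, hl, hre, rfl⟩

lemma leaf_height_zero' {l : W} (hl : IsLeafVx H l) : heightVx H l = 0 :=
  Nat.le_zero.mp (by simpa [SimpleGraph.dist_self] using height_le_dist' hl ⟨SimpleGraph.Walk.nil⟩)

lemma height_attained'
    {v : W} (hne : {n | ∃ l, IsLeafVx H l ∧ H.Reachable v l ∧ H.dist v l = n}.Nonempty) :
    ∃ l, IsLeafVx H l ∧ H.Reachable v l ∧ H.dist v l = heightVx H v :=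
  Nat.sInf_mem hne

lemma exists_mid_of_dist_two' {u v : W} (hre : H.Reachable u v) (hd : H.dist u v = 2) :
    ∃ w, H.Adj u w ∧ H.Adj w v := by
  obtain ⟨p, hp⟩ := hre.exists_walk_length_eq_dist
  rw [hd] at hp
  have h1 := p.adj_getVert_succ (i := 0) (by omega)
  have h2 := p.adj_getVert_succ (i := 1) (by omega)
  rw [p.getVert_zero] at h1
  have h3 : p.getVert 2 = v := by rw [← hp]; exact p.getVert_length
  rw [h3] at h2
  exact ⟨p.getVert 1, h1, h2⟩

lemma exists_mid_of_dist_three' {u v : W} (hre : H.Reachable u v) (hd : H.dist u v = 3) :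
    ∃ a b, H.Adj u a ∧ H.Adj a b ∧ H.Adj b v := by
  obtain ⟨p, hp⟩ := hre.exists_walk_length_eq_dist
  rw [hd] at hp
  have h1 := p.adj_getVert_succ (i := 0) (by omega)
  have h2 := p.adj_getVert_succ (i := 1) (by omega)
  have h3 := p.adj_getVert_succ (i := 2) (by omega)
  rw [p.getVert_zero] at h1
  have h4 : p.getVert 3 = v := by rw [← hp]; exact p.getVert_length
  rw [h4] at h3
  exact ⟨p.getVert 1, p.getVert 2, h1, h2, h3⟩

lemma eq_of_dist_zero' {u v : W} (hre : H.Reachable u v) (hd : H.dist u v = 0) : u = v := by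
  obtain ⟨p, hp⟩ := hre.exists_walk_length_eq_dist
  rw [hd] at hp
  exact SimpleGraph.Walk.eq_of_length_eq_zero hp

end Aux

section Aux2
variable {V : Type} (G : SimpleGraph V) (s : Set V)

lemma induce_adj_of' {a b : V} (ha : a ∈ s) (hb : b ∈ s) (h : G.Adj a b) :
    (G.induce s).Adj ⟨a, ha⟩ ⟨b, hb⟩ := h

lemma adj_of_induce_adj' {a b : s} (h : (G.induce s).Adj a b) : G.Adj a.val b.val := h

lemma induce_neighbor_image' (v : s) :
    Subtype.val '' ((G.induce s).neighborSet v) = G.neighborSet v.val ∩ s := by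
  ext x
  constructor
  · rintro ⟨⟨y, hy⟩, ha, rfl⟩
    exact ⟨ha, hy⟩
  · rintro ⟨ha, hx⟩
    exact ⟨⟨x, hx⟩, ha, rfl⟩

lemma induce_leaf_iff' (v : s) :
    IsLeafVx (G.induce s) v ↔ (G.neighborSet v.val ∩ s).ncard = 1 := by
  unfold IsLeafVx
  rw [← induce_neighbor_image' G s v, Set.ncard_image_of_injective _ Subtype.val_injective]

end Aux2

/-- **Corollary**: if `T` is a finite TD-unmixed balanced tree of height 3 and `r` is a
vertex of height 3, then `V_odd(T∖{r}) = V_odd(T)∖{r}`, heights on the left being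
computed in the induced subgraph `T∖{r}` and on the right in `T`. -/
theorem oddVertices_delete_height_three_vertex {V : Type} [Fintype V] (G : SimpleGraph V)
    (htree : G.IsTree) (hbal : IsBalanced G) (hunm : TDUnmixed G)
    (hht : heightGr G = 3) (r : V) (hr : heightVx G r = 3) :
    Subtype.val '' {v : {x : V // x ≠ r} | Odd (heightVx (G.induce {x | x ≠ r}) v)}
      = {v : V | Odd (heightVx G v)} \ {r} := by
  classical
  have hconn := htree.isConnected
  -- every height is at most 3
  have hle3 : ∀ v, heightVx G v ≤ 3 := by
    intro v
    rw [← hht]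
    exact le_csSup (Set.finite_range _).bddAbove ⟨v, rfl⟩
  -- the defining sets are nonempty (a leaf exists, reachable from anywhere)
  have hSne : ∀ v : V, {n | ∃ l, IsLeafVx G l ∧ G.Reachable v l ∧ G.dist v l = n}.Nonempty := by
    have h0 : {n | ∃ l, IsLeafVx G l ∧ G.Reachable r l ∧ G.dist r l = n}.Nonempty := by
      by_contra h
      rw [Set.not_nonempty_iff_eq_empty] at h
      have hr' := hr
      unfold heightVx at hr'
      rw [h] at hr'
      simp [Nat.sInf_empty] at hr'
    obtain ⟨n, l, hl, -, -⟩ := h0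
    intro v
    exact ⟨G.dist v l, l, hl, hconn v l, rfl⟩
  have hatt : ∀ v : V, ∃ l, IsLeafVx G l ∧ G.Reachable v l ∧ G.dist v l = heightVx G v :=
    fun v => height_attained' (hSne v)
  -- adjacent heights differ by exactly one
  have hadj_le : ∀ u w : V, G.Adj u w → heightVx G u ≤ heightVx G w + 1 := by
    intro u w h
    obtain ⟨l, hl, hre, hd⟩ := hatt w
    obtain ⟨p, hp⟩ := hre.exists_walk_length_eq_dist
    have h1 : G.dist u l ≤ heightVx G w + 1 := by
      have := SimpleGraph.dist_le (SimpleGraph.Walk.cons h p)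
      simpa [SimpleGraph.Walk.length_cons, hp, hd] using this
    exact le_trans (height_le_dist' hl ⟨SimpleGraph.Walk.cons h p⟩) h1
  have hadj_cases : ∀ u w, G.Adj u w →
      heightVx G u = heightVx G w + 1 ∨ heightVx G w = heightVx G u + 1 := by
    intro u w h
    have h1 := hadj_le u w h
    have h2 := hadj_le w u h.symm
    have h3 := hbal u w h
    omega
  -- vertices adjacent to r have height 2
  have hadj_r : ∀ x, G.Adj x r → heightVx G x = 2 := by
    intro x h
    have h1 := hadj_cases x r h
    have h2 := hle3 x
    omega
  -- subgraph-leaf characterizations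
  have hleaf_iff' : ∀ (v : V) (hv : v ≠ r), ¬ G.Adj v r →
      (IsLeafVx (G.induce {x | x ≠ r}) ⟨v, hv⟩ ↔ IsLeafVx G v) := by
    intro v hv hna
    rw [induce_leaf_iff']
    have heq : G.neighborSet v ∩ {x | x ≠ r} = G.neighborSet v := by
      apply Set.inter_eq_left.mpr
      intro y hy
      rintro rfl
      exact hna hy
    rw [heq]
    rfl
  have hnotleaf : ∀ (v : V) (hv : v ≠ r), heightVx G v = 1 ∨ heightVx G v = 3 →
      ¬ IsLeafVx (G.induce {x | x ≠ r}) ⟨v, hv⟩ := by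
    intro v hv hcase hlf
    have hna : ¬ G.Adj v r := by
      intro ha
      have := hadj_r v ha
      omega
    have h1 := (hleaf_iff' v hv hna).mp hlf
    have h2 := leaf_height_zero' h1
    omega
  have hleaf_ne_r : ∀ l : V, IsLeafVx G l → l ≠ r := by
    intro l hl hlr
    have := leaf_height_zero' hl
    rw [hlr, hr] at this
    omega
  have hleaf_pres : ∀ (l : V) (hl : IsLeafVx G l) (hlr : l ≠ r),
      IsLeafVx (G.induce {x | x ≠ r}) ⟨l, hlr⟩ := by
    intro l hl hlr
    have hna : ¬ G.Adj l r := by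
      intro ha
      have h1 := hadj_r l ha
      have h2 := leaf_height_zero' hl
      omega
    exact (hleaf_iff' l hlr hna).mpr hl
  -- main parity claim
  have key : ∀ (v : V) (hv : v ≠ r),
      (Odd (heightVx (G.induce {x | x ≠ r}) ⟨v, hv⟩) ↔ Odd (heightVx G v)) := by
    intro v hv
    obtain ⟨l, hl, hre, hd⟩ := hatt v
    have hlr : l ≠ r := hleaf_ne_r l hl
    have hl' := hleaf_pres l hl hlr
    have hv3 := hle3 v
    -- case on heightVx G v
    rcases (show heightVx G v = 0 ∨ heightVx G v = 1 ∨ heightVx G v = 2 ∨ heightVx G v = 3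
        by omega) with h0 | h1 | h2 | h3
    · -- v is itself a leaf
      rw [h0] at hd
      obtain rfl := eq_of_dist_zero' hre hd
      have : heightVx (G.induce {x | x ≠ r}) ⟨v, hv⟩ = 0 := leaf_height_zero' hl'
      rw [this, h0]
    · -- height 1
      rw [h1] at hd
      have hadj : G.Adj v l := SimpleGraph.dist_eq_one_iff_adj.mp hd
      have hadj' : (G.induce {x | x ≠ r}).Adj ⟨v, hv⟩ ⟨l, hlr⟩ :=
        induce_adj_of' G _ hv hlr hadj
      have hub : heightVx (G.induce {x | x ≠ r}) ⟨v, hv⟩ ≤ 1 := by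
        refine le_trans (height_le_dist' hl' ⟨SimpleGraph.Walk.cons hadj' SimpleGraph.Walk.nil⟩) ?_
        have := SimpleGraph.dist_le (SimpleGraph.Walk.cons hadj' (SimpleGraph.Walk.nil))
        simpa using this
      have hne' : {n | ∃ l', IsLeafVx (G.induce {x | x ≠ r}) l' ∧
          (G.induce {x | x ≠ r}).Reachable ⟨v, hv⟩ l' ∧
          (G.induce {x | x ≠ r}).dist ⟨v, hv⟩ l' = n}.Nonempty :=
        ⟨_, ⟨l, hlr⟩, hl', ⟨SimpleGraph.Walk.cons hadj' SimpleGraph.Walk.nil⟩, rfl⟩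
      obtain ⟨l'', hl'', hre'', hd''⟩ := height_attained' hne'
      have hlb : heightVx (G.induce {x | x ≠ r}) ⟨v, hv⟩ ≠ 0 := by
        intro h0'
        rw [h0'] at hd''
        obtain heq := eq_of_dist_zero' hre'' hd''
        rw [← heq] at hl''
        exact hnotleaf v hv (Or.inl h1) hl''
      have : heightVx (G.induce {x | x ≠ r}) ⟨v, hv⟩ = 1 := by omega
      rw [this, h1]
    · -- height 2
      rw [h2] at hd
      obtain ⟨w, hvw, hwl⟩ := exists_mid_of_dist_two' hre hd
      have hw1 : heightVx G w = 1 := by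
        have := hadj_cases w l hwl
        have hl0 := leaf_height_zero' hl
        omega
      have hwr : w ≠ r := by
        intro heq; rw [heq, hr] at hw1; omega
      have hadj1 : (G.induce {x | x ≠ r}).Adj ⟨v, hv⟩ ⟨w, hwr⟩ :=
        induce_adj_of' G _ hv hwr hvw
      have hadj2 : (G.induce {x | x ≠ r}).Adj ⟨w, hwr⟩ ⟨l, hlr⟩ :=
        induce_adj_of' G _ hwr hlr hwl
      have hne' : {n | ∃ l', IsLeafVx (G.induce {x | x ≠ r}) l' ∧
          (G.induce {x | x ≠ r}).Reachable ⟨v, hv⟩ l' ∧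
          (G.induce {x | x ≠ r}).dist ⟨v, hv⟩ l' = n}.Nonempty :=
        ⟨_, ⟨l, hlr⟩, hl',
          ⟨SimpleGraph.Walk.cons hadj1 (SimpleGraph.Walk.cons hadj2 SimpleGraph.Walk.nil)⟩, rfl⟩
      have hub : heightVx (G.induce {x | x ≠ r}) ⟨v, hv⟩ ≤ 2 := by
        refine le_trans (height_le_dist' hl'
          ⟨SimpleGraph.Walk.cons hadj1 (SimpleGraph.Walk.cons hadj2 SimpleGraph.Walk.nil)⟩) ?_
        have := SimpleGraph.dist_le
          (SimpleGraph.Walk.cons hadj1 (SimpleGraph.Walk.cons hadj2 SimpleGraph.Walk.nil))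
        simpa using this
      obtain ⟨l'', hl'', hre'', hd''⟩ := height_attained' hne'
      have hlb1 : heightVx (G.induce {x | x ≠ r}) ⟨v, hv⟩ ≠ 1 := by
        intro h1'
        rw [h1'] at hd''
        have hadj'' : (G.induce {x | x ≠ r}).Adj ⟨v, hv⟩ l'' :=
          SimpleGraph.dist_eq_one_iff_adj.mp hd''
        have hG : G.Adj v l''.val := adj_of_induce_adj' G _ hadj''
        have hcase := hadj_cases v l''.val hG
        have hle := hle3 l''.val
        have hx : heightVx G l''.val = 1 ∨ heightVx G l''.val = 3 := by omega
        obtain ⟨lv, lp⟩ := l''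
        exact hnotleaf lv lp hx hl''
      have : heightVx (G.induce {x | x ≠ r}) ⟨v, hv⟩ = 0 ∨
          heightVx (G.induce {x | x ≠ r}) ⟨v, hv⟩ = 2 := by omega
      rcases this with h' | h' <;> rw [h', h2] <;> simp [Nat.odd_iff]
    · -- height 3
      rw [h3] at hd
      obtain ⟨a, b, hva, hab, hbl⟩ := exists_mid_of_dist_three' hre hd
      have hb1 : heightVx G b = 1 := by
        have := hadj_cases b l hbl
        have hl0 := leaf_height_zero' hl
        omega
      have ha2 : heightVx G a = 2 := by
        have := hadj_cases v a hva
        have := hle3 a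
        omega
      have har : a ≠ r := by intro heq; rw [heq, hr] at ha2; omega
      have hbr : b ≠ r := by intro heq; rw [heq, hr] at hb1; omega
      have hadj1 : (G.induce {x | x ≠ r}).Adj ⟨v, hv⟩ ⟨a, har⟩ :=
        induce_adj_of' G _ hv har hva
      have hadj2 : (G.induce {x | x ≠ r}).Adj ⟨a, har⟩ ⟨b, hbr⟩ :=
        induce_adj_of' G _ har hbr hab
      have hadj3 : (G.induce {x | x ≠ r}).Adj ⟨b, hbr⟩ ⟨l, hlr⟩ :=
        induce_adj_of' G _ hbr hlr hbl
      have hne' : {n | ∃ l', IsLeafVx (G.induce {x | x ≠ r}) l' ∧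
          (G.induce {x | x ≠ r}).Reachable ⟨v, hv⟩ l' ∧
          (G.induce {x | x ≠ r}).dist ⟨v, hv⟩ l' = n}.Nonempty :=
        ⟨_, ⟨l, hlr⟩, hl',
          ⟨SimpleGraph.Walk.cons hadj1 (SimpleGraph.Walk.cons hadj2
            (SimpleGraph.Walk.cons hadj3 SimpleGraph.Walk.nil))⟩, rfl⟩
      have hub : heightVx (G.induce {x | x ≠ r}) ⟨v, hv⟩ ≤ 3 := by
        refine le_trans (height_le_dist' hl'
          ⟨SimpleGraph.Walk.cons hadj1 (SimpleGraph.Walk.cons hadj2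
            (SimpleGraph.Walk.cons hadj3 SimpleGraph.Walk.nil))⟩) ?_
        have := SimpleGraph.dist_le
          (SimpleGraph.Walk.cons hadj1 (SimpleGraph.Walk.cons hadj2
            (SimpleGraph.Walk.cons hadj3 SimpleGraph.Walk.nil)))
        simpa using this
      obtain ⟨l'', hl'', hre'', hd''⟩ := height_attained' hne'
      have hlb0 : heightVx (G.induce {x | x ≠ r}) ⟨v, hv⟩ ≠ 0 := by
        intro h0'
        rw [h0'] at hd''
        obtain heq := eq_of_dist_zero' hre'' hd''
        rw [← heq] at hl''
        exact hnotleaf v hv (Or.inr h3) hl''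
      have hlb2 : heightVx (G.induce {x | x ≠ r}) ⟨v, hv⟩ ≠ 2 := by
        intro h2'
        rw [h2'] at hd''
        obtain ⟨w', hvw', hwl'⟩ := exists_mid_of_dist_two' hre'' hd''
        have hG1 : G.Adj v w'.val := adj_of_induce_adj' G _ hvw'
        have hG2 : G.Adj w'.val l''.val := adj_of_induce_adj' G _ hwl'
        have hw2 : heightVx G w'.val = 2 := by
          have := hadj_cases v w'.val hG1
          have := hle3 w'.val
          omega
        have hcase := hadj_cases w'.val l''.val hG2
        have hle := hle3 l''.val
        have hx : heightVx G l''.val = 1 ∨ heightVx G l''.val = 3 := by omega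
        obtain ⟨lv, lp⟩ := l''
        exact hnotleaf lv lp hx hl''
      have : heightVx (G.induce {x | x ≠ r}) ⟨v, hv⟩ = 1 ∨
          heightVx (G.induce {x | x ≠ r}) ⟨v, hv⟩ = 3 := by omega
      rcases this with h' | h' <;> rw [h', h3] <;> simp [Nat.odd_iff]
  -- assemble
  ext x
  simp only [Set.mem_image, Set.mem_setOf_eq, Set.mem_diff, Set.mem_singleton_iff]
  constructor
  · rintro ⟨⟨y, hy⟩, hodd, rfl⟩
    exact ⟨(key y hy).1 hodd, hy⟩
  · rintro ⟨hodd, hx⟩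
    exact ⟨⟨x, hx⟩, (key x hx).2 hodd, rfl⟩
end

section
/- Let T be a finite TD-unmixed balanced tree of height 3, and let u be a vertex of height 2. Then V_odd(T∖N[u]) = V_odd(T)∖N_T(u), where heights on the left are computed in the induced subgraph T∖N[u] and on the right in T. -/
open scoped Classical

/-- Parity of a coloring flips along each edge, hence along walks. -/
private lemma walk_parity {W : Type*} {H : SimpleGraph W} {c : W → ZMod 2}
    (hflip : ∀ x y, H.Adj x y → c y = c x + 1) {a b : W} (p : H.Walk a b) :
    c b = c a + (p.length : ZMod 2) := by
  induction p with
  | nil => simp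
  | cons h p ih =>
    rw [SimpleGraph.Walk.length_cons, ih, hflip _ _ h]
    push_cast
    ring

private lemma zmod2_cases (a : ZMod 2) : a = 0 ∨ a = 1 := by
  have : ∀ b : ZMod 2, b = 0 ∨ b = 1 := by decide
  exact this a

private lemma odd_iff_cast_one (n : ℕ) : Odd n ↔ (n : ZMod 2) = 1 := by
  constructor
  · rintro ⟨k, rfl⟩
    push_cast
    rw [show (2 : ZMod 2) = 0 by decide]
    ring
  · intro h
    rcases Nat.even_or_odd n with he | ho
    · obtain ⟨k, rfl⟩ := he
      push_cast at h
      have h2 : ∀ a : ZMod 2, a + a = 0 := by decide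
      rw [h2] at h
      exact absurd h (by decide)
    · exact ho

/-- **Corollary**: if `T` is a finite TD-unmixed balanced tree of height 3 and `u` is a
vertex of height 2, then `V_odd(T∖N[u]) = V_odd(T)∖N_T(u)`, heights on the left being
computed in the induced subgraph `T∖N[u]` and on the right in `T`. -/
theorem oddVertices_delete_closed_neighborhood {V : Type} [Fintype V] (G : SimpleGraph V)
    (htree : G.IsTree) (hbal : IsBalanced G) (hunm : TDUnmixed G)
    (hht : heightGr G = 3) (u : V) (hu : heightVx G u = 2) :
    Subtype.val ''
        {v : ((G.neighborSet u ∪ {u})ᶜ : Set V) |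
          Odd (heightVx (G.induce ((G.neighborSet u ∪ {u})ᶜ)) v)}
      = {v : V | Odd (heightVx G v)} \ G.neighborSet u := by
  classical
  set S : Set V := (G.neighborSet u ∪ {u})ᶜ with hSdef
  set H : SimpleGraph S := G.induce S with hHdef
  have hconn : G.Connected := htree.isConnected
  have hreach : ∀ x y : V, G.Reachable x y := fun x y => hconn.preconnected x y
  -- there is a leaf in `G`
  have husetne : {n | ∃ l, IsLeafVx G l ∧ G.Reachable u l ∧ G.dist u l = n}.Nonempty := by
    by_contra hemp
    rw [Set.not_nonempty_iff_eq_empty] at hemp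
    rw [heightVx, hemp, Nat.sInf_empty] at hu
    exact absurd hu (by norm_num)
  obtain ⟨n0, l0, hl0leaf, -, -⟩ := husetne
  -- nontriviality
  have hex : ∀ v : V, ∃ y, y ≠ v := by
    intro v
    obtain ⟨w0, hw0⟩ : (G.neighborSet l0).Nonempty := by
      rw [← Set.ncard_pos (Set.toFinite _), hl0leaf]; norm_num
    rw [SimpleGraph.mem_neighborSet] at hw0
    by_cases h : l0 = v
    · exact ⟨w0, by rintro rfl; exact hw0.ne' h.symm⟩
    · exact ⟨l0, h⟩
  -- every vertex has a neighbor
  have hdeg1 : ∀ v : V, ∃ w, G.Adj v w := by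
    intro v
    obtain ⟨y, hy⟩ := hex v
    obtain ⟨p⟩ := hreach v y
    cases p with
    | nil => exact absurd rfl hy
    | cons h _ => exact ⟨_, h⟩
  -- leaves have height 0
  have hleaf0 : ∀ l : V, IsLeafVx G l → heightVx G l = 0 := by
    intro l hl
    have : heightVx G l ≤ 0 :=
      Nat.sInf_le ⟨l, hl, SimpleGraph.Reachable.refl l, SimpleGraph.dist_self⟩
    omega
  -- height vs dist to leaves
  have hmemle : ∀ v l : V, IsLeafVx G l → heightVx G v ≤ G.dist v l := fun v l hl =>
    Nat.sInf_le ⟨l, hl, hreach v l, rfl⟩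
  have hatt : ∀ v : V, ∃ l, IsLeafVx G l ∧ G.dist v l = heightVx G v := by
    intro v
    have hne : {n | ∃ l, IsLeafVx G l ∧ G.Reachable v l ∧ G.dist v l = n}.Nonempty :=
      ⟨G.dist v l0, l0, hl0leaf, hreach v l0, rfl⟩
    obtain ⟨l, hl, -, hd⟩ := Nat.sInf_mem hne
    exact ⟨l, hl, hd⟩
  -- adjacent heights differ by at most 1
  have hstep : ∀ x y : V, G.Adj x y → heightVx G x ≤ heightVx G y + 1 := by
    intro x y hxy
    obtain ⟨l, hl, hdl⟩ := hatt y
    have h1 : heightVx G x ≤ G.dist x l := hmemle x l hl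
    have h2 : G.dist x l ≤ G.dist x y + G.dist y l := hconn.dist_triangle
    have h3 : G.dist x y = 1 := SimpleGraph.dist_eq_one_iff_adj.mpr hxy
    omega
  -- the parity coloring
  set c : V → ZMod 2 := fun v => ((heightVx G v : ℕ) : ZMod 2) with hcdef
  have hflip : ∀ x y : V, G.Adj x y → c y = c x + 1 := by
    intro x y hxy
    have h1 := hstep x y hxy
    have h2 := hstep y x hxy.symm
    have h3 := hbal x y hxy
    have h4 : heightVx G y = heightVx G x + 1 ∨ heightVx G x = heightVx G y + 1 := by omega
    rcases h4 with h | h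
    · simp only [hcdef, h]
      push_cast
      ring
    · have hx : c x = c y + 1 := by
        simp only [hcdef, h]
        push_cast
        ring
      rw [hx]
      have : ∀ a : ZMod 2, a = a + 1 + 1 := by decide
      exact this _
  have hflip' : ∀ x y : S, H.Adj x y → c ↑y = c ↑x + 1 := by
    intro x y hxy
    exact hflip _ _ (by simpa [hHdef] using hxy)
  have hcu : c u = 0 := by
    simp only [hcdef, hu]
    decide
  -- neighbors of odd-height surviving vertices survive
  have hstayS : ∀ v : V, v ∈ S → Odd (heightVx G v) → ∀ w, G.Adj v w → w ∈ S := by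
    intro v hv hodd w hvw
    have hcv : c v = 1 := (odd_iff_cast_one _).mp hodd
    have hcw : c w = c v + 1 := hflip v w hvw
    intro hmem
    rcases hmem with hmem | hmem
    · rw [SimpleGraph.mem_neighborSet] at hmem
      have : c w = c u + 1 := hflip u w hmem
      rw [hcu, hcv] at *
      rw [this] at hcw
      exact absurd hcw (by decide)
    · rw [Set.mem_singleton_iff] at hmem
      subst hmem
      exact hv (Or.inl (by rw [SimpleGraph.mem_neighborSet]; exact hvw.symm))
  -- odd-height surviving vertices have at least two neighbors in `H`
  have hdeg2' : ∀ v : S, Odd (heightVx G ↑v) → 1 < (H.neighborSet v).ncard := by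
    intro v hodd
    have hnotleaf : (G.neighborSet ↑v).ncard ≠ 1 := by
      intro hleaf
      have := hleaf0 ↑v hleaf
      rw [this] at hodd
      simp [Nat.odd_iff] at hodd
    have hpos : 0 < (G.neighborSet ↑v).ncard := by
      rw [Set.ncard_pos (Set.toFinite _)]
      obtain ⟨w, hw⟩ := hdeg1 ↑v
      exact ⟨w, by rwa [SimpleGraph.mem_neighborSet]⟩
    have h2 : 1 < (G.neighborSet ↑v).ncard := by omega
    rw [Set.one_lt_ncard (Set.toFinite _)] at h2
    obtain ⟨a, ha, b, hb, hab⟩ := h2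
    rw [SimpleGraph.mem_neighborSet] at ha hb
    have haS : a ∈ S := hstayS ↑v v.2 hodd a ha
    have hbS : b ∈ S := hstayS ↑v v.2 hodd b hb
    rw [Set.one_lt_ncard (Set.toFinite _)]
    refine ⟨⟨a, haS⟩, ?_, ⟨b, hbS⟩, ?_, ?_⟩
    · rw [SimpleGraph.mem_neighborSet]; simpa [hHdef] using ha
    · rw [SimpleGraph.mem_neighborSet]; simpa [hHdef] using hb
    · intro heq
      exact hab (congrArg Subtype.val heq)
  -- leaves of `H` have even `G`-height
  have hleaf'even : ∀ l : S, IsLeafVx H l → ¬ Odd (heightVx G ↑l) := by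
    intro l hl hodd
    have := hdeg2' l hodd
    rw [IsLeafVx] at hl
    omega
  have hleafc0 : ∀ l : S, IsLeafVx H l → c ↑l = 0 := by
    intro l hl
    rcases zmod2_cases (c ↑l) with h | h
    · exact h
    · exact absurd ((odd_iff_cast_one _).mpr h) (hleaf'even l hl)
  -- every odd-height surviving vertex reaches a leaf of `H`
  have hfindleaf : ∀ v : S, Odd (heightVx G ↑v) →
      ∃ l : S, IsLeafVx H l ∧ H.Reachable v l := by
    intro v hodd
    have h2 := hdeg2' v hodd
    obtain ⟨w0, hw0⟩ : ∃ w0 : S, H.Adj v w0 := by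
      have hpos : 0 < (H.neighborSet v).ncard := by omega
      rw [Set.ncard_pos (Set.toFinite _)] at hpos
      obtain ⟨w0, hw0⟩ := hpos
      exact ⟨w0, by rwa [SimpleGraph.mem_neighborSet] at hw0⟩
    obtain ⟨l, hlC, hmax⟩ := Set.exists_max_image {x : S | H.Reachable v x}
      (fun x => H.dist v x) (Set.toFinite _) ⟨v, SimpleGraph.Reachable.refl v⟩
    simp only [Set.mem_setOf_eq] at hlC hmax
    refine ⟨l, ?_, hlC⟩
    have hd1 : 1 ≤ H.dist v l := by
      have := hmax w0 hw0.reachable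
      rw [SimpleGraph.dist_eq_one_iff_adj.mpr hw0] at this
      exact this
    -- parity of distances from v in H
    have hpar : ∀ x : S, H.Reachable v x → c ↑x = c ↑v + ((H.dist v x : ℕ) : ZMod 2) := by
      intro x hx
      obtain ⟨p, hp⟩ := hx.exists_walk_length_eq_dist
      have := walk_parity hflip' p
      rwa [hp] at this
    -- every H-neighbor of l is at distance exactly d - 1
    have hkey : ∀ q : S, H.Adj l q → H.dist v q = H.dist v l - 1 := by
      intro q hq
      have hqC : H.Reachable v q := hlC.trans hq.reachable
      have hle : H.dist v q ≤ H.dist v l := hmax q hqC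
      have hge : H.dist v l ≤ H.dist v q + 1 := by
        obtain ⟨p, hp⟩ := hqC.exists_walk_length_eq_dist
        have := SimpleGraph.dist_le (p.concat hq.symm)
        rwa [SimpleGraph.Walk.length_concat, hp] at this
      have hneq : H.dist v q ≠ H.dist v l := by
        intro heq
        have h1 := hpar q hqC
        have h2 := hpar l hlC
        have h3 := hflip' l q hq
        rw [heq, ← h2] at h1
        rw [h1] at h3
        have : ∀ a : ZMod 2, ¬ (a = a + 1) := by decide
        exact this _ h3
      omega
    -- all H-neighbors of l coincide
    have huniq : ∀ q1 q2 : S, H.Adj l q1 → H.Adj l q2 → q1 = q2 := by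
      intro q1 q2 hq1 hq2
      have hmk : ∀ (q : S) (hq : H.Adj l q),
          ∃ r : H.Walk l v, r.IsPath ∧ r.support = l :: q :: r.support.tail.tail := by
        intro q hq
        obtain ⟨p, hppath, hplen⟩ := (hlC.trans hq.reachable).exists_path_of_dist
        have hlns : l ∉ p.support := by
          intro hmem
          have h1 := SimpleGraph.Walk.length_takeUntil_le p hmem
          have h2 := SimpleGraph.dist_le (p.takeUntil l hmem)
          have h3 := hkey q hq
          omega
        refine ⟨SimpleGraph.Walk.cons hq p.reverse, ?_, ?_⟩
        · rw [SimpleGraph.Walk.cons_isPath_iff]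
          refine ⟨hppath.reverse, ?_⟩
          rw [SimpleGraph.Walk.support_reverse]
          simpa using hlns
        · rw [SimpleGraph.Walk.support_cons]
          congr 1
          rw [SimpleGraph.Walk.support_eq_cons p.reverse]
          simp
      obtain ⟨r1, hr1path, hr1sup⟩ := hmk q1 hq1
      obtain ⟨r2, hr2path, hr2sup⟩ := hmk q2 hq2
      set f := (SimpleGraph.Embedding.induce S (G := G)).toHom with hfdef
      have hfinj : Function.Injective f := Subtype.val_injective
      have hm1 : (r1.map f).IsPath := SimpleGraph.Walk.map_isPath_of_injective hfinj hr1path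
      have hm2 : (r2.map f).IsPath := SimpleGraph.Walk.map_isPath_of_injective hfinj hr2path
      have heq : (⟨r1.map f, hm1⟩ : G.Path ↑l ↑v) = ⟨r2.map f, hm2⟩ :=
        htree.IsAcyclic.path_unique _ _
      have heqw : r1.map f = r2.map f := congrArg Subtype.val heq
      have hsup := congrArg SimpleGraph.Walk.support heqw
      rw [SimpleGraph.Walk.support_map, SimpleGraph.Walk.support_map, hr1sup, hr2sup] at hsup
      simp only [List.map_cons, List.cons.injEq] at hsup
      exact Subtype.val_injective hsup.2.1
    -- l has some neighbor
    have hvl : v ≠ l := by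
      intro h
      rw [← h, SimpleGraph.dist_self] at hd1
      omega
    obtain ⟨p⟩ := hlC
    obtain ⟨q0, hq0adj, -, -⟩ :=
      SimpleGraph.Walk.not_nil_iff.mp (SimpleGraph.Walk.not_nil_of_ne (Ne.symm hvl)
        (p := p.reverse))
    have hsingle : H.neighborSet l = {q0} := by
      apply Set.eq_singleton_iff_unique_mem.mpr
      refine ⟨by rwa [SimpleGraph.mem_neighborSet], ?_⟩
      intro q hq
      rw [SimpleGraph.mem_neighborSet] at hq
      exact huniq q q0 hq hq0adj
    rw [IsLeafVx, hsingle, Set.ncard_singleton]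
  -- the main set equality
  ext x
  simp only [Set.mem_image, Set.mem_setOf_eq, Set.mem_diff]
  constructor
  · rintro ⟨⟨v, hvS⟩, hodd, rfl⟩
    have hne0 : heightVx H ⟨v, hvS⟩ ≠ 0 := by
      intro h0
      rw [h0] at hodd
      simp [Nat.odd_iff] at hodd
    have hsetne : {n | ∃ l, IsLeafVx H l ∧ H.Reachable ⟨v, hvS⟩ l ∧
        H.dist ⟨v, hvS⟩ l = n}.Nonempty := by
      by_contra hemp
      rw [Set.not_nonempty_iff_eq_empty] at hemp
      apply hne0
      rw [heightVx, hemp, Nat.sInf_empty]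
    have hmem : heightVx H ⟨v, hvS⟩ ∈ {n | ∃ l, IsLeafVx H l ∧ H.Reachable ⟨v, hvS⟩ l ∧
        H.dist ⟨v, hvS⟩ l = n} := Nat.sInf_mem hsetne
    obtain ⟨l, hlleaf, hlreach, hld⟩ := hmem
    obtain ⟨p, hp⟩ := hlreach.exists_walk_length_eq_dist
    have hpar := walk_parity hflip' p
    rw [hp, hld] at hpar
    have hcl0 : c ↑l = 0 := hleafc0 l hlleaf
    have hh1 : ((heightVx H ⟨v, hvS⟩ : ℕ) : ZMod 2) = 1 := (odd_iff_cast_one _).mp hodd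
    rw [hcl0, hh1] at hpar
    have hcv : c v = 1 := by
      rcases zmod2_cases (c v) with h | h
      · rw [h] at hpar; exact absurd hpar (by decide)
      · exact h
    refine ⟨(odd_iff_cast_one _).mpr hcv, ?_⟩
    intro hmem
    exact hvS (Or.inl hmem)
  · rintro ⟨hodd, hnadj⟩
    have hvu : x ≠ u := by
      rintro rfl
      rw [hu] at hodd
      simp [Nat.odd_iff] at hodd
    have hxS : x ∈ S := by
      intro hmem
      rcases hmem with hmem | hmem
      · exact hnadj hmem
      · exact hvu hmem
    refine ⟨⟨x, hxS⟩, ?_, rfl⟩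
    obtain ⟨l, hlleaf, hlreach⟩ := hfindleaf ⟨x, hxS⟩ hodd
    have hsetne : {n | ∃ l, IsLeafVx H l ∧ H.Reachable ⟨x, hxS⟩ l ∧
        H.dist ⟨x, hxS⟩ l = n}.Nonempty := ⟨H.dist ⟨x, hxS⟩ l, l, hlleaf, hlreach, rfl⟩
    have hmem : heightVx H ⟨x, hxS⟩ ∈ {n | ∃ l, IsLeafVx H l ∧ H.Reachable ⟨x, hxS⟩ l ∧
        H.dist ⟨x, hxS⟩ l = n} := Nat.sInf_mem hsetne
    obtain ⟨l', hl'leaf, hl'reach, hl'd⟩ := hmem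
    obtain ⟨p, hp⟩ := hl'reach.exists_walk_length_eq_dist
    have hpar := walk_parity hflip' p
    rw [hp, hl'd] at hpar
    have hcl0 : c ↑l' = 0 := hleafc0 l' hl'leaf
    have hcx : c x = 1 := (odd_iff_cast_one _).mp hodd
    rw [hcl0, hcx] at hpar
    apply (odd_iff_cast_one _).mpr
    rcases zmod2_cases ((heightVx H ⟨x, hxS⟩ : ℕ) : ZMod 2) with h | h
    · rw [h] at hpar; exact absurd hpar (by decide)
    · exact h
end

section
/- Let G=(V,E) be a finite simple graph, k a field, and R = k[x_v : v∈V]. Then the open neighborhood ideal satisfies N(G) = ⋂_{S ∈ TD(G)} ⟨x_v : v∈S⟩ = ⋂_{S ∈ MTD(G)} ⟨x_v : v∈S⟩, where TD(G) is the set of all TD-sets of G and MTD(G) is the set of all minimal TD-sets of G; moreover the second intersection is irredundant (omitting any minimal TD-set changes the intersection). -/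
open scoped Classical

section MonomialDefs

/-- The squarefree monomial `X_S = ∏_{v ∈ S} x_v` with support the (finite) set `S`
(`X_∅ = 1`; junk value `1` for infinite `S`). -/
noncomputable def XS (k : Type) [Field k] {σ : Type} (S : Set σ) : MvPolynomial σ k :=
  ∏ᶠ v ∈ S, MvPolynomial.X v

/-- The open neighborhood ideal of a graph `G`: generated by the monomials `X_{N(v)}`
for all vertices `v`. -/
noncomputable def ONIset (k : Type) [Field k] {V : Type} (G : SimpleGraph V) :
    Ideal (MvPolynomial V k) :=
  Ideal.span {m | ∃ v : V, m = XS k (G.neighborSet v)}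

end MonomialDefs


section Aux

open MvPolynomial

variable {V : Type} [Fintype V]

/-- The exponent vector of the squarefree monomial supported on `S`. -/
noncomputable def eS (S : Set V) : V →₀ ℕ := ∑ v ∈ S.toFinset, Finsupp.single v 1

lemma eS_apply (S : Set V) (u : V) : eS S u = if u ∈ S then 1 else 0 := by
  classical
  simp [eS, Finsupp.finset_sum_apply, Finsupp.single_apply, Finset.sum_ite_eq,
    Set.mem_toFinset]

lemma prod_X_eq (k : Type) [Field k] (t : Finset V) :
    (∏ v ∈ t, (MvPolynomial.X v : MvPolynomial V k))
      = monomial (∑ v ∈ t, Finsupp.single v 1) 1 := by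
  classical
  induction t using Finset.induction with
  | empty => simp
  | insert _ _ h ih =>
    rw [Finset.prod_insert h, Finset.sum_insert h, ih, X, monomial_mul, one_mul]

lemma XS_eq (k : Type) [Field k] (S : Set V) : XS k S = monomial (eS S) (1 : k) := by
  classical
  rw [XS, ← Set.coe_toFinset S, finprod_mem_coe_finset, prod_X_eq, eS, Set.coe_toFinset]

lemma mem_ONIset_iff (k : Type) [Field k] (G : SimpleGraph V) (f : MvPolynomial V k) :
    f ∈ ONIset k G ↔ ∀ d ∈ f.support, ∃ v : V, eS (G.neighborSet v) ≤ d := by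
  have hset : {m | ∃ v : V, m = XS k (G.neighborSet v)}
      = (fun s => monomial s (1 : k)) '' (Set.range fun v => eS (G.neighborSet v)) := by
    ext m
    simp only [Set.mem_setOf_eq, Set.image, Set.mem_range, XS_eq]
    constructor
    · rintro ⟨v, rfl⟩; exact ⟨_, ⟨v, rfl⟩, rfl⟩
    · rintro ⟨_, ⟨v, rfl⟩, rfl⟩; exact ⟨v, rfl⟩
  rw [ONIset, hset, mem_ideal_span_monomial_image]
  constructor
  · intro h d hd
    obtain ⟨si, ⟨v, rfl⟩, hle⟩ := h d hd
    exact ⟨v, hle⟩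
  · intro h d hd
    obtain ⟨v, hv⟩ := h d hd
    exact ⟨_, ⟨v, rfl⟩, hv⟩

lemma exists_minTD (G : SimpleGraph V) :
    ∀ n (S : Set V), S.ncard ≤ n → IsTDSet G S → ∃ S' ⊆ S, IsMinTDSet G S' := by
  intro n
  induction n with
  | zero =>
    intro S hcard hTD
    have : S = ∅ := Set.ncard_eq_zero (S.toFinite) |>.mp (Nat.le_zero.mp hcard)
    subst this
    exact ⟨∅, subset_rfl, hTD, fun S' hS' => absurd (hS'.trans_le (Set.empty_subset _)) (lt_irrefl _)⟩
  | succ n ih =>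
    intro S hcard hTD
    by_cases hm : IsMinTDSet G S
    · exact ⟨S, subset_rfl, hm⟩
    · simp only [IsMinTDSet, not_and, not_forall, not_not] at hm
      obtain ⟨S', hss, hTD'⟩ := hm hTD
      have hlt : S'.ncard < S.ncard := Set.ncard_lt_ncard hss S.toFinite
      obtain ⟨S'', hsub, hmin⟩ := ih S' (by omega) hTD'
      exact ⟨S'', hsub.trans hss.subset, hmin⟩

end Aux

/-- **Theorem** (primary decomposition of the open neighborhood ideal): for a finite
simple graph `G`, `N(G) = ⋂_{S ∈ TD(G)} ⟨x_v : v ∈ S⟩ = ⋂_{S ∈ MTD(G)} ⟨x_v : v ∈ S⟩`,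
and the second intersection is irredundant. -/
theorem ONI_primary_decomposition (k : Type) [Field k] {V : Type} [Fintype V]
    (G : SimpleGraph V) :
    ONIset k G = (⨅ (S : Set V) (_ : IsTDSet G S), Ideal.span (MvPolynomial.X '' S)) ∧
    ONIset k G = (⨅ (S : Set V) (_ : IsMinTDSet G S), Ideal.span (MvPolynomial.X '' S)) ∧
    ∀ S₀ : Set V, IsMinTDSet G S₀ →
      (⨅ (S : Set V) (_ : IsMinTDSet G S ∧ S ≠ S₀), Ideal.span (MvPolynomial.X '' S))
        ≠ ONIset k G := by
    classical
  have key : ONIset k G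
      = ⨅ (S : Set V) (_ : IsTDSet G S), Ideal.span (MvPolynomial.X '' S) := by
    apply le_antisymm
    · refine le_iInf fun S => le_iInf fun hS => ?_
      intro f hf
      rw [mem_ONIset_iff] at hf
      rw [MvPolynomial.mem_ideal_span_X_image]
      intro d hd
      obtain ⟨v, hv⟩ := hf d hd
      have hv2 : v ∈ nbhd G S := hS ▸ Set.mem_univ v
      obtain ⟨u, huS, hadj⟩ := hv2
      refine ⟨u, huS, ?_⟩
      have h1 : eS (G.neighborSet v) u = 1 := by
        rw [eS_apply, if_pos (by exact hadj.symm)]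
      have := hv u
      rw [h1] at this
      omega
    · intro f hf
      rw [mem_ONIset_iff]
      intro d hd
      by_contra hc
      push_neg at hc
      have hc' : ∀ v : V, ∃ u, u ∈ G.neighborSet v ∧ d u = 0 := by
        intro v
        have := hc v
        rw [Finsupp.le_def] at this
        push_neg at this
        obtain ⟨u, hu⟩ := this
        rw [eS_apply] at hu
        by_cases h : u ∈ G.neighborSet v
        · rw [if_pos h] at hu; exact ⟨u, h, by omega⟩
        · rw [if_neg h] at hu; omega
      set T : Set V := {u | d u = 0} with hT
      have hTD : IsTDSet G T := by
        rw [IsTDSet, Set.eq_univ_iff_forall]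
        intro w
        obtain ⟨u, hu, hdu⟩ := hc' w
        exact ⟨u, hdu, hu.symm⟩
      have hfT : f ∈ Ideal.span (MvPolynomial.X '' T) := by
        have := Ideal.mem_iInf.mp hf T
        exact Ideal.mem_iInf.mp this hTD
      rw [MvPolynomial.mem_ideal_span_X_image] at hfT
      obtain ⟨i, hiT, hdi⟩ := hfT d hd
      exact hdi hiT
  have key2 : ONIset k G
      = ⨅ (S : Set V) (_ : IsMinTDSet G S), Ideal.span (MvPolynomial.X '' S) := by
    rw [key]
    apply le_antisymm
    · exact le_iInf fun S => le_iInf fun hS => iInf₂_le S hS.1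
    · refine le_iInf fun S => le_iInf fun hS => ?_
      obtain ⟨S', hsub, hmin⟩ := exists_minTD G S.ncard S le_rfl hS
      exact le_trans (iInf₂_le S' hmin)
        (Ideal.span_mono (Set.image_mono hsub))
  refine ⟨key, key2, ?_⟩
  intro S₀ h₀ hEq
  set m : MvPolynomial V k := MvPolynomial.monomial (eS S₀ᶜ) 1 with hm
  have hmsupp : m.support = {eS S₀ᶜ} := by
    rw [hm, MvPolynomial.support_monomial, if_neg one_ne_zero]
  have hmem : m ∈ ⨅ (S : Set V) (_ : IsMinTDSet G S ∧ S ≠ S₀),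
      Ideal.span (MvPolynomial.X '' S) := by
    rw [Ideal.mem_iInf]
    intro S
    rw [Ideal.mem_iInf]
    rintro ⟨hS, hne⟩
    rw [MvPolynomial.mem_ideal_span_X_image]
    intro d hd
    rw [hmsupp, Finset.mem_singleton] at hd
    subst hd
    have : ¬ S ⊆ S₀ := by
      intro hsub
      exact h₀.2 S (ssubset_of_subset_of_ne hsub hne) hS.1
    obtain ⟨i, hiS, hiS₀⟩ := Set.not_subset.mp this
    exact ⟨i, hiS, by rw [eS_apply, if_pos (Set.mem_compl hiS₀)]; omega⟩
  have hnot : m ∉ ONIset k G := by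
    intro hmON
    have : m ∈ Ideal.span (MvPolynomial.X '' S₀) := by
      rw [key2] at hmON
      have := Ideal.mem_iInf.mp hmON S₀
      exact Ideal.mem_iInf.mp this h₀
    rw [MvPolynomial.mem_ideal_span_X_image] at this
    obtain ⟨i, hiS₀, hdi⟩ := this (eS S₀ᶜ) (by rw [hmsupp]; exact Finset.mem_singleton_self _)
    rw [eS_apply, if_neg (by simpa using hiS₀)] at hdi
    exact hdi rfl
  rw [hEq] at hmem
  exact hnot hmem
end

section
/- Let V be a finite set and A = {A_1,…,A_k} a Sperner family of subsets of V with ⋃_{i=1}^k A_i = V and |A_i| > 1 for all i, and let τ(A) = {T_1,…,T_m} be the set of minimal transversals of A. Let G_A be the graph with vertex set V ∪ {t_1,…,t_m} whose edges are all pairs of distinct vertices of V together with, for each i, the edges joining t_i to exactly the vertices of T_i. Then the set of minimal total dominating sets of G_A is exactly A. -/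
open scoped Classical

section TransversalDefs

variable {V : Type}

/-- A Sperner family: no member contains another. -/
def IsSperner (𝒜 : Set (Set V)) : Prop := ∀ A ∈ 𝒜, ∀ B ∈ 𝒜, A ⊆ B → A = B

/-- A transversal of a family of sets: a set meeting every member. -/
def IsTransversal (𝒜 : Set (Set V)) (T : Set V) : Prop := ∀ A ∈ 𝒜, (T ∩ A).Nonempty

/-- A minimal transversal. -/
def IsMinTransversal (𝒜 : Set (Set V)) (T : Set V) : Prop :=
  IsTransversal 𝒜 T ∧ ∀ T' ⊂ T, ¬ IsTransversal 𝒜 T'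

/-- The graph `G_𝒜` of Construction 6.4 (Bahadır–Ekim–Gözüpek): vertices are the
elements of `V` together with one new vertex `t_T` for each minimal transversal `T` of
`𝒜`; all pairs of distinct vertices of `V` are adjacent, and each `t_T` is adjacent to
exactly the vertices of `T`. -/
def GA (𝒜 : Set (Set V)) :
    SimpleGraph (V ⊕ {T : Set V // IsMinTransversal 𝒜 T}) where
  Adj a b :=
    match a, b with
    | Sum.inl u, Sum.inl v => u ≠ v
    | Sum.inl u, Sum.inr t => u ∈ t.1
    | Sum.inr t, Sum.inl u => u ∈ t.1
    | Sum.inr _, Sum.inr _ => False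
  symm := by
    constructor
    rintro (u | t) (v | s) h
    · exact h.symm
    · exact h
    · exact h
    · exact h.elim
  loopless := by
    constructor
    rintro (u | t) h
    · exact h rfl
    · exact h

end TransversalDefs

section MyAux

variable {V : Type} [Fintype V]

lemma myExists_minTransversal_subset (𝒜 : Set (Set V)) (T : Set V)
    (hT : IsTransversal 𝒜 T) : ∃ T' ⊆ T, IsMinTransversal 𝒜 T' := by
  generalize hn : T.ncard = n
  induction n using Nat.strong_induction_on generalizing T with
  | _ n ih =>
    by_cases hmin : ∀ T' ⊂ T, ¬ IsTransversal 𝒜 T'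
    · exact ⟨T, subset_rfl, hT, hmin⟩
    · push_neg at hmin
      obtain ⟨T', hsub, hT'⟩ := hmin
      obtain ⟨T'', h1, h2⟩ :=
        ih T'.ncard (hn ▸ Set.ncard_lt_ncard hsub T.toFinite) T' hT' rfl
      exact ⟨T'', h1.trans hsub.subset, h2⟩

lemma myGA_TD_of_mem (𝒜 : Set (Set V)) (A : Set V) (hA : A ∈ 𝒜) (hbig : 1 < A.ncard) :
    IsTDSet (GA 𝒜) (Sum.inl '' A) := by
  ext x
  simp only [Set.mem_univ, iff_true]
  cases x with
  | inl v =>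
    obtain ⟨a, ha, hav⟩ := Set.exists_ne_of_one_lt_ncard hbig v
    exact ⟨Sum.inl a, ⟨a, ha, rfl⟩, hav⟩
  | inr t =>
    obtain ⟨u, huT, huA⟩ := t.2.1 A hA
    exact ⟨Sum.inl u, ⟨u, huA, rfl⟩, huT⟩

lemma myExists_mem_subset (𝒜 : Set (Set V)) (B : Set V)
    (h : ∀ T : Set V, IsMinTransversal 𝒜 T → (B ∩ T).Nonempty) :
    ∃ A ∈ 𝒜, A ⊆ B := by
  by_contra hc
  push_neg at hc
  have htr : IsTransversal 𝒜 Bᶜ := by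
    intro A hA
    obtain ⟨x, hxA, hxB⟩ := Set.not_subset.mp (hc A hA)
    exact ⟨x, hxB, hxA⟩
  obtain ⟨T, hsub, hT⟩ := myExists_minTransversal_subset 𝒜 Bᶜ htr
  obtain ⟨x, hxB, hxT⟩ := h T hT
  exact hsub hxT hxB

lemma myGA_not_TD_of_ssub (𝒜 : Set (Set V)) (hsp : IsSperner 𝒜) (A : Set V)
    (hA : A ∈ 𝒜) (A' : Set V) (hss : A' ⊂ A) :
    ¬ IsTDSet (GA 𝒜) (Sum.inl '' A') := by
  intro hTD
  have htr : IsTransversal 𝒜 A'ᶜ := by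
    intro B hB
    by_contra hemp
    have hBA' : B ⊆ A' := by
      intro x hx
      by_contra hx'
      exact hemp ⟨x, hx', hx⟩
    have : B = A := hsp B hB A hA (hBA'.trans hss.subset)
    exact hss.not_subset (this ▸ hBA')
  obtain ⟨T, hsub, hT⟩ := myExists_minTransversal_subset 𝒜 A'ᶜ htr
  have : Sum.inr ⟨T, hT⟩ ∈ nbhd (GA 𝒜) (Sum.inl '' A') := by
    rw [hTD]; trivial
  obtain ⟨v, hv, hadj⟩ := this
  obtain ⟨u, huA', rfl⟩ := hv
  have huT : u ∈ T := hadj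
  exact hsub huT huA'

end MyAux

/-- **Construction** (Bahadır–Ekim–Gözüpek): for a Sperner family `𝒜` of subsets of a
finite set `V` covering `V`, all of whose members have more than one element, the set of
minimal total dominating sets of `G_𝒜` is exactly `𝒜`. -/
theorem minTDSets_of_GA {V : Type} [Fintype V] (𝒜 : Set (Set V)) (hsp : IsSperner 𝒜)
    (hcov : ⋃₀ 𝒜 = Set.univ) (hbig : ∀ A ∈ 𝒜, 1 < A.ncard) :
    {S : Set (V ⊕ {T : Set V // IsMinTransversal 𝒜 T}) | IsMinTDSet (GA 𝒜) S}
      = (fun A => Sum.inl '' A) '' 𝒜 := by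
  ext S
  simp only [Set.mem_setOf_eq, Set.mem_image]
  constructor
  · rintro ⟨hTD, hmin⟩
    -- B := preimage of S under inl meets every minimal transversal
    set B : Set V := Sum.inl ⁻¹' S with hB
    have hmeets : ∀ T : Set V, IsMinTransversal 𝒜 T → (B ∩ T).Nonempty := by
      intro T hT
      have : Sum.inr ⟨T, hT⟩ ∈ nbhd (GA 𝒜) S := by rw [hTD]; trivial
      obtain ⟨v, hv, hadj⟩ := this
      cases v with
      | inl u => exact ⟨u, hv, hadj⟩
      | inr t => exact absurd hadj (by exact fun h => h)
    obtain ⟨A, hA, hAB⟩ := myExists_mem_subset 𝒜 B hmeets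
    have hsubS : Sum.inl '' A ⊆ S := by
      rintro x ⟨a, ha, rfl⟩
      exact hAB ha
    have hATD : IsTDSet (GA 𝒜) (Sum.inl '' A) := myGA_TD_of_mem 𝒜 A hA (hbig A hA)
    have : Sum.inl '' A = S := by
      by_contra hne
      exact hmin (Sum.inl '' A) ⟨hsubS, fun h => hne (hsubS.antisymm h)⟩ hATD
    exact ⟨A, hA, this⟩
  · rintro ⟨A, hA, rfl⟩
    refine ⟨myGA_TD_of_mem 𝒜 A hA (hbig A hA), ?_⟩
    intro S' hS' hTD'
    -- S' is the image of a proper subset of A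
    set A' : Set V := {a ∈ A | Sum.inl a ∈ S'} with hA'
    have hS'eq : S' = Sum.inl '' A' := by
      ext x
      constructor
      · intro hx
        obtain ⟨a, ha, rfl⟩ := hS'.subset hx
        exact ⟨a, ⟨ha, hx⟩, rfl⟩
      · rintro ⟨a, ⟨ha, hx⟩, rfl⟩
        exact hx
    have hA'ss : A' ⊂ A := by
      refine ⟨fun a ha => ha.1, fun hsub => ?_⟩
      obtain ⟨x, hxA, hxS'⟩ := Set.exists_of_ssubset hS'
      obtain ⟨a, ha, rfl⟩ := hxA
      exact hxS' ((hS'eq ▸ (Set.mem_image _ _ _).mpr ⟨a, hsub ha, rfl⟩))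
    rw [hS'eq] at hTD'
    exact myGA_not_TD_of_ssub 𝒜 hsp A hA A' hA'ss hTD'
end

section
/- Let V be a finite set and A = {A_1,…,A_k} a Sperner family of subsets of V with ⋃_{i=1}^k A_i = V and |A_i| > 1 for all i, let τ(A) = {T_1,…,T_m} be the set of minimal transversals of A, and let G_A be the graph with vertex set V ∪ {t_1,…,t_m} whose edges are all pairs of distinct vertices of V together with, for each i, the edges joining t_i to exactly the vertices of T_i. Then, over a field k, the open neighborhood ideal satisfies N(G_A) = ⟨X_{T_1},…,X_{T_m}⟩, and {X_{T_1},…,X_{T_m}} is a minimal generating set: no X_{T_i} lies in the ideal generated by the other X_{T_j}. -/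
open scoped Classical

section AuxProof

open MvPolynomial

variable {σ : Type} [Fintype σ]

/-- The indicator finsupp of a set in a fintype. -/
noncomputable def indF (S : Set σ) : σ →₀ ℕ := ∑ v ∈ S.toFinset, Finsupp.single v 1

lemma indF_apply (S : Set σ) (a : σ) : indF S a = if a ∈ S then 1 else 0 := by
  classical
  rw [indF, Finsupp.finset_sum_apply]
  simp only [Finsupp.single_apply]
  rw [Finset.sum_ite_eq' S.toFinset a (fun _ => 1)]
  simp [Set.mem_toFinset]

lemma prod_X_finset (k : Type) [Field k] (s : Finset σ) :
    (∏ v ∈ s, (X v : MvPolynomial σ k)) = monomial (∑ v ∈ s, Finsupp.single v 1) 1 := by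
  classical
  induction s using Finset.induction with
  | empty => simp [monomial_zero']
  | insert _ _ h ih =>
      rw [Finset.prod_insert h, Finset.sum_insert h, ih, ← pow_one (X _),
        X_pow_eq_monomial, monomial_mul, one_mul]

lemma XS_eq_monomial (k : Type) [Field k] (S : Set σ) :
    XS k S = monomial (indF S) 1 := by
  classical
  have h1 : XS k S = ∏ v ∈ S.toFinset, (X v : MvPolynomial σ k) := by
    rw [XS, ← finprod_mem_coe_finset, Set.coe_toFinset]
  rw [h1, indF, prod_X_finset]

lemma indF_add_diff {A B : Set σ} (hAB : A ⊆ B) :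
    indF A + indF (B \ A) = indF B := by
  classical
  ext a
  simp only [Finsupp.add_apply, indF_apply, Set.mem_diff]
  by_cases h : a ∈ A
  · simp [h, hAB h]
  · by_cases h2 : a ∈ B <;> simp [h, h2]

lemma subset_of_indF_le {A B : Set σ} (h : indF A ≤ indF B) : A ⊆ B := by
  intro a ha
  have := h a
  rw [indF_apply, indF_apply, if_pos ha] at this
  by_contra hb
  rw [if_neg hb] at this
  omega

end AuxProof

section TransAux

variable {V : Type} [Fintype V]

lemma exists_minTransversal (𝒜 : Set (Set V)) {T : Set V} (hT : IsTransversal 𝒜 T) :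
    ∃ T₀, T₀ ⊆ T ∧ IsMinTransversal 𝒜 T₀ := by
  obtain ⟨m, hm, hmin⟩ := (IsWellFounded.wf :
      WellFounded ((· < ·) : Set V → Set V → Prop)).has_min
    {S | S ⊆ T ∧ IsTransversal 𝒜 S} ⟨T, subset_rfl, hT⟩
  refine ⟨m, hm.1, hm.2, fun T' hT' hTr => ?_⟩
  exact hmin T' ⟨hT'.subset.trans hm.1, hTr⟩ hT'

lemma GA_nbhd_inr (𝒜 : Set (Set V)) (t : {T : Set V // IsMinTransversal 𝒜 T}) :
    (GA 𝒜).neighborSet (Sum.inr t) = Sum.inl '' t.1 := by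
  ext b
  cases b with
  | inl u =>
      constructor
      · intro h; exact ⟨u, h, rfl⟩
      · rintro ⟨v, hv, h⟩; exact (Sum.inl_injective h) ▸ hv
  | inr s =>
      constructor
      · intro h; exact h.elim
      · rintro ⟨v, _, h⟩; exact (Sum.inl_ne_inr h).elim

end TransAux

/-- **Lemma** (minimal generators of `N(G_𝒜)`): in the setting of the
Bahadır–Ekim–Gözüpek construction, the open neighborhood ideal of `G_𝒜` is generated by
the monomials `X_{T}` for the minimal transversals `T` of `𝒜`, and these form a minimal
generating set. -/
theorem ONI_of_GA_minimal_generators (k : Type) [Field k] {V : Type} [Fintype V]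
    (𝒜 : Set (Set V)) (hsp : IsSperner 𝒜) (hcov : ⋃₀ 𝒜 = Set.univ)
    (hbig : ∀ A ∈ 𝒜, 1 < A.ncard) :
    ONIset k (GA 𝒜)
      = Ideal.span {m | ∃ t : {T : Set V // IsMinTransversal 𝒜 T},
          m = XS k (Sum.inl '' t.1 :
            Set (V ⊕ {T : Set V // IsMinTransversal 𝒜 T}))} ∧
    ∀ t : {T : Set V // IsMinTransversal 𝒜 T},
      XS k (Sum.inl '' t.1 : Set (V ⊕ {T : Set V // IsMinTransversal 𝒜 T}))
        ∉ Ideal.span {m | ∃ s : {T : Set V // IsMinTransversal 𝒜 T}, s ≠ t ∧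
            m = XS k (Sum.inl '' s.1 :
              Set (V ⊕ {T : Set V // IsMinTransversal 𝒜 T}))} := by

  classical
  -- abbreviations
  set τ := {T : Set V // IsMinTransversal 𝒜 T}
  set W := V ⊕ τ
  -- the right-hand span as a span of monomials
  have hspan1 : {m : MvPolynomial W k | ∃ t : τ, m = XS k (Sum.inl '' t.1 : Set W)}
      = (fun d => MvPolynomial.monomial d (1 : k)) ''
        {d | ∃ t : τ, d = indF (Sum.inl '' t.1 : Set W)} := by
    ext m
    constructor
    · rintro ⟨t, rfl⟩
      exact ⟨indF (Sum.inl '' t.1 : Set W), ⟨t, rfl⟩, (XS_eq_monomial k _).symm⟩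
    · rintro ⟨d, ⟨t, rfl⟩, rfl⟩
      exact ⟨t, (XS_eq_monomial k (Sum.inl '' t.1 : Set W)).symm⟩
  constructor
  · -- the equality of ideals
    apply le_antisymm
    · rw [ONIset, Ideal.span_le]
      rintro m ⟨w, rfl⟩
      cases w with
      | inr t =>
          rw [GA_nbhd_inr]
          exact Ideal.subset_span ⟨t, rfl⟩
      | inl u =>
          -- find a minimal transversal avoiding u
          have htr : IsTransversal 𝒜 (Set.univ \ {u}) := by
            intro A hA
            obtain ⟨a, b, ha, hb, hab⟩ := (Set.one_lt_ncard_iff (Set.toFinite A)).mp (hbig A hA)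
            rcases eq_or_ne a u with rfl | hau
            · refine ⟨b, ⟨Set.mem_univ b, fun hbu => hab ?_⟩, hb⟩
              simp only [Set.mem_singleton_iff] at hbu
              exact hbu.symm
            · exact ⟨a, ⟨Set.mem_univ a, hau⟩, ha⟩
          obtain ⟨T₀, hT₀sub, hT₀⟩ := exists_minTransversal 𝒜 htr
          have hsub : (Sum.inl '' T₀ : Set W) ⊆ (GA 𝒜).neighborSet (Sum.inl u) := by
            rintro b ⟨v, hv, rfl⟩
            have hvu : v ≠ u := (hT₀sub hv).2
            show (GA 𝒜).Adj (Sum.inl u) (Sum.inl v)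
            exact fun h => hvu h.symm
          have key : XS k ((GA 𝒜).neighborSet (Sum.inl u) : Set W)
              = XS k (Sum.inl '' T₀ : Set W)
                * XS k (((GA 𝒜).neighborSet (Sum.inl u) \ Sum.inl '' T₀ : Set W)) := by
            rw [XS_eq_monomial, XS_eq_monomial, XS_eq_monomial,
              MvPolynomial.monomial_mul, one_mul, indF_add_diff hsub]
          rw [key]
          exact Ideal.mul_mem_right _ _ (Ideal.subset_span ⟨⟨T₀, hT₀⟩, rfl⟩)
    · rw [Ideal.span_le]
      rintro m ⟨t, rfl⟩
      rw [← GA_nbhd_inr 𝒜 t]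
      exact Ideal.subset_span ⟨Sum.inr t, rfl⟩
  · -- minimality
    intro t hmem
    have hspan2 : {m : MvPolynomial W k | ∃ s : τ, s ≠ t ∧ m = XS k (Sum.inl '' s.1 : Set W)}
        = (fun d => MvPolynomial.monomial d (1 : k)) ''
          {d | ∃ s : τ, s ≠ t ∧ d = indF (Sum.inl '' s.1 : Set W)} := by
      ext m
      constructor
      · rintro ⟨s, hs, rfl⟩
        exact ⟨indF (Sum.inl '' s.1 : Set W), ⟨s, hs, rfl⟩, (XS_eq_monomial k _).symm⟩
      · rintro ⟨d, ⟨s, hs, rfl⟩, rfl⟩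
        exact ⟨s, hs, (XS_eq_monomial k (Sum.inl '' s.1 : Set W)).symm⟩
    rw [hspan2, XS_eq_monomial, MvPolynomial.mem_ideal_span_monomial_image] at hmem
    have hsupp : indF (Sum.inl '' t.1 : Set W)
        ∈ (MvPolynomial.monomial (indF (Sum.inl '' t.1 : Set W)) (1 : k)).support := by
      rw [MvPolynomial.support_monomial, if_neg one_ne_zero]
      exact Finset.mem_singleton_self _
    obtain ⟨d, ⟨s, hst, rfl⟩, hle⟩ := hmem _ hsupp
    have hsub : s.1 ⊆ t.1 := by
      have := subset_of_indF_le hle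
      intro a ha
      obtain ⟨b, hb, hba⟩ := this ⟨a, ha, rfl⟩
      exact (Sum.inl_injective hba) ▸ hb
    have hne : s.1 ≠ t.1 := fun h => hst (Subtype.ext h)
    exact t.2.2 s.1 (ssubset_of_subset_of_ne hsub hne) s.2.1
end
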